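/- arXiv:1903.04453 — 7 statements merged into one kernel-verified Lean document; each statement's English description precedes it below -/
import Mathlib

section
/- For every odd cycle H and every nonempty proper subset S of the vertices of H, the neighborhood N(S) of S in H has strictly more elements than S. -/
open SimpleGraph Finset

/-- For every odd cycle `H = C_n` (`n` odd, `n ≥ 3`) and every nonempty
proper subset `S` of its vertices, the neighborhood `N(S)` has strictly more elements
than `S`. -/
theorem odd_cycle_neighborhood_gt (n : ℕ) (hodd : Odd n) (h3 : 3 ≤ n)
    (S : Finset (Fin n)) (hne : S.Nonempty) (hproper : S ≠ Finset.univ) :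
    S.card < (Finset.univ.filter fun v => ∃ u ∈ S, (cycleGraph n).Adj v u).card := by
  haveI : NeZero n := ⟨by omega⟩
  set T := Finset.univ.filter fun v => ∃ u ∈ S, (cycleGraph n).Adj v u with hT
  have hone : (1 : Fin n).val = 1 := by
    rw [Fin.val_one', Nat.mod_eq_of_lt (by omega)]
  have hadj1 : ∀ u : Fin n, (cycleGraph n).Adj (u + 1) u := by
    intro u
    rw [cycleGraph_adj']
    left; rw [add_sub_cancel_left, hone]
  have hadj2 : ∀ u : Fin n, (cycleGraph n).Adj (u - 1) u := by
    intro u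
    rw [cycleGraph_adj']
    right; rw [sub_sub_cancel, hone]
  have hsub1 : S.image (· + 1) ⊆ T := by
    intro v hv
    obtain ⟨u, hu, rfl⟩ := Finset.mem_image.mp hv
    exact Finset.mem_filter.mpr ⟨Finset.mem_univ _, u, hu, hadj1 u⟩
  have hsub2 : S.image (· - 1) ⊆ T := by
    intro v hv
    obtain ⟨u, hu, rfl⟩ := Finset.mem_image.mp hv
    exact Finset.mem_filter.mpr ⟨Finset.mem_univ _, u, hu, hadj2 u⟩
  have hinj1 : Function.Injective (· + 1 : Fin n → Fin n) := fun a b h => by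
    simpa using h
  have hinj2 : Function.Injective (· - 1 : Fin n → Fin n) := fun a b h => by
    simpa [sub_eq_iff_eq_add] using h
  have hc1 : (S.image (· + 1)).card = S.card := Finset.card_image_of_injective _ hinj1
  have hc2 : (S.image (· - 1)).card = S.card := Finset.card_image_of_injective _ hinj2
  have hle : S.card ≤ T.card := hc1 ▸ Finset.card_le_card hsub1
  rcases lt_or_eq_of_le hle with h | heq
  · exact h
  exfalso
  have he1 : S.image (· + 1) = T := Finset.eq_of_subset_of_card_le hsub1 (by omega)
  have he2 : S.image (· - 1) = T := Finset.eq_of_subset_of_card_le hsub2 (by omega)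
  letI := Fin.instCommRing n
  have hclosed : ∀ s ∈ S, s + 2 ∈ S := by
    intro s hs
    have : s + 1 ∈ S.image (· - 1) := by
      rw [he2, ← he1]
      exact Finset.mem_image.mpr ⟨s, hs, rfl⟩
    obtain ⟨t, ht, hts⟩ := Finset.mem_image.mp this
    have : t = s + 2 := by
      have := hts
      simp only [sub_eq_iff_eq_add] at this
      rw [this]; ring
    rwa [← this]
  obtain ⟨s₀, hs₀⟩ := hne
  have hiter : ∀ k : ℕ, s₀ + 2 * (k : Fin n) ∈ S := by
    intro k
    induction k with
    | zero => simpa using hs₀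
    | succ k ih =>
      have : s₀ + 2 * ((k + 1 : ℕ) : Fin n) = (s₀ + 2 * (k : Fin n)) + 2 := by
        push_cast; ring
      rw [this]
      exact hclosed _ ih
  have h2c : (2 : Fin n) * (((n + 1) / 2 : ℕ) : Fin n) = 1 := by
    have hdvd : 2 ∣ n + 1 := by
      obtain ⟨j, hj⟩ := hodd; omega
    have h2 : 2 * ((n + 1) / 2) = n + 1 := Nat.mul_div_cancel' hdvd
    calc (2 : Fin n) * (((n + 1) / 2 : ℕ) : Fin n)
        = ((2 * ((n + 1) / 2) : ℕ) : Fin n) := by push_cast; ring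
      _ = ((n + 1 : ℕ) : Fin n) := by rw [h2]
      _ = 1 := by push_cast [Fin.natCast_self]; ring
  apply hproper
  apply Finset.eq_univ_of_forall
  intro v
  have := hiter (((v - s₀) * (((n + 1) / 2 : ℕ) : Fin n)).val)
  rwa [Fin.cast_val_eq_self, show s₀ + 2 * ((v - s₀) * (((n + 1) / 2 : ℕ) : Fin n)) = v by
    rw [mul_comm (v - s₀), ← mul_assoc, h2c]; ring] at this
end

section
/- Let H be an odd cycle and let G be a graph. Let P = v_0 v_1 ... v_{k+1} be a path in G with k+1 edges such that every internal vertex of P has degree 2 in G. For any homomorphism φ mapping v_0 to a vertex of H, the set B_φ(v_{k+1} | v_0, P) of possible images of v_{k+1} under extensions of φ to P has size at least min(k+2, |V(H)|). -/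
open SimpleGraph
open Fin.CommRing

private lemma walk_add_exists (m : ℕ) : ∀ (L : ℕ) (a : Fin (m + 2)),
    ∃ w : (cycleGraph (m + 2)).Walk a (a + (L : Fin (m + 2))), w.length = L := by
  intro L
  induction L with
  | zero => intro a; exact ⟨(Walk.nil).copy rfl (by push_cast; ring), by simp⟩
  | succ L ih =>
    intro a
    obtain ⟨w, hw⟩ := ih (a + 1)
    have hadj : (cycleGraph (m + 2)).Adj a (a + 1) := by
      rw [cycleGraph_adj]; right; ring
    exact ⟨(Walk.cons hadj w).copy rfl (by push_cast; ring), by simp [hw]⟩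

private lemma walk_sub_exists (m : ℕ) : ∀ (L : ℕ) (a : Fin (m + 2)),
    ∃ w : (cycleGraph (m + 2)).Walk a (a - (L : Fin (m + 2))), w.length = L := by
  intro L
  induction L with
  | zero => intro a; exact ⟨(Walk.nil).copy rfl (by push_cast; ring), by simp⟩
  | succ L ih =>
    intro a
    obtain ⟨w, hw⟩ := ih (a - 1)
    have hadj : (cycleGraph (m + 2)).Adj a (a - 1) := by
      rw [cycleGraph_adj]; left; ring
    exact ⟨(Walk.cons hadj w).copy rfl (by push_cast; ring), by simp [hw]⟩

/-- Let `H = C_n` be an odd cycle and `G` a graph.  Let `P` be a path in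
`G` from `v₀` to `v_{k+1}` with `k+1` edges whose internal vertices all have degree 2
in `G`.  For any homomorphism `φ` sending `v₀` to a vertex `c` of `H`, the set
`B_φ(v_{k+1} | v₀, P)` of possible images of `v_{k+1}` under extensions of `φ` to `P`
(equivalently, the set of endpoints of walks of length `k+1` in `H` starting at `c`)
has size at least `min (k+2) n`. -/
theorem reachable_set_card_ge (n : ℕ) (hodd : Odd n) (h3 : 3 ≤ n)
    {V : Type} [Fintype V] (G : SimpleGraph V) [DecidableRel G.Adj]
    (k : ℕ) {v0 v1 : V} (p : G.Walk v0 v1) (hpath : p.IsPath)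
    (hlen : p.length = k + 1)
    (hint : ∀ w ∈ p.support, w ≠ v0 → w ≠ v1 → G.degree w = 2)
    (c : Fin n) :
    min (k + 2) n ≤
      {x : Fin n | ∃ q : (cycleGraph n).Walk c x, q.length = k + 1}.ncard := by
  obtain ⟨m, rfl⟩ : ∃ m, n = m + 2 := ⟨n - 2, by omega⟩
  set M := min (k + 2) (m + 2) with hM
  set e : ℕ → Fin (m + 2) :=
    fun j => c + ((k + 1 - j : ℕ) : Fin (m + 2)) - ((j : ℕ) : Fin (m + 2)) with he
  set S := {x : Fin (m + 2) | ∃ q : (cycleGraph (m + 2)).Walk c x, q.length = k + 1} with hS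
  -- membership
  have hmem : ∀ j, j ≤ k + 1 → e j ∈ S := by
    intro j hj
    obtain ⟨w1, hw1⟩ := walk_add_exists m (k + 1 - j) c
    obtain ⟨w2, hw2⟩ := walk_sub_exists m j (c + ((k + 1 - j : ℕ) : Fin (m + 2)))
    exact ⟨w1.append w2, by simp [hw1, hw2]; omega⟩
  -- injectivity
  have hinj : Set.InjOn e (Finset.range M) := by
    intro j hj j' hj' hee
    simp only [Finset.coe_range, Set.mem_Iio] at hj hj'
    have hjk : j ≤ k + 1 := by omega
    have hjk' : j' ≤ k + 1 := by omega
    have hjn : j < m + 2 := by omega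
    have hjn' : j' < m + 2 := by omega
    have h2 : (2 * j : ℕ) % (m + 2) = (2 * j' : ℕ) % (m + 2) := by
      have hc : ((2 * j : ℕ) : Fin (m + 2)) = ((2 * j' : ℕ) : Fin (m + 2)) := by
        simp only [he] at hee
        rw [Nat.cast_sub hjk, Nat.cast_sub hjk'] at hee
        push_cast
        linear_combination -hee
      have h := congrArg Fin.val hc
      rwa [Fin.val_natCast, Fin.val_natCast] at h
    have hco : Nat.gcd (m + 2) 2 = 1 := Nat.coprime_comm.mp hodd.coprime_two_left
    have hje := Nat.ModEq.cancel_left_of_coprime hco h2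
    have hje' : j % (m + 2) = j' % (m + 2) := hje
    rwa [Nat.mod_eq_of_lt hjn, Nat.mod_eq_of_lt hjn'] at hje'
  -- counting
  have hsub : ↑((Finset.range M).image e) ⊆ S := by
    intro x hx
    simp only [Finset.coe_image, Set.mem_image, Finset.coe_range, Set.mem_Iio] at hx
    obtain ⟨j, hj, rfl⟩ := hx
    exact hmem j (by omega)
  have hcard : ((Finset.range M).image e).card = M := by
    rw [Finset.card_image_of_injOn hinj, Finset.card_range]
  have hfin : M ≤ S.ncard := by
    calc M = (↑((Finset.range M).image e) : Set (Fin (m + 2))).ncard := by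
            rw [Set.ncard_coe_finset, hcard]
      _ ≤ S.ncard := Set.ncard_le_ncard hsub S.toFinite
  exact hfin
end

section
/- If H is an odd cycle and G is an H-critical graph, then G contains no k-string with k ≥ |V(H)| − 2. -/
open SimpleGraph

/-- A graph `G` is `H`-critical if every proper subgraph of `G` admits a homomorphism
to `H`, but `G` itself does not. -/
def HCritical {V W : Type} (G : SimpleGraph V) (H : SimpleGraph W) : Prop :=
  ¬ Nonempty (G →g H) ∧ ∀ G' : G.Subgraph, G' ≠ ⊤ → Nonempty (G'.coe →g H)

/-- A string in `G` is a path whose internal vertices all have degree 2 in `G`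
and whose endpoints have degree at least 3. -/
def IsString {V : Type} [Fintype V] (G : SimpleGraph V) [DecidableRel G.Adj]
    {u v : V} (p : G.Walk u v) : Prop :=
  p.IsPath ∧ 3 ≤ G.degree u ∧ 3 ≤ G.degree v ∧
    ∀ w ∈ p.support, w ≠ u → w ≠ v → G.degree w = 2

open Fin.CommRing in
lemma cycle_walk_seq (n : ℕ) (hodd : Odd n) (h3 : 3 ≤ n) (a b : Fin n) (L : ℕ)
    (hL : n - 1 ≤ L) :
    ∃ c : ℕ → Fin n, c 0 = a ∧ c L = b ∧ ∀ i < L, (cycleGraph n).Adj (c i) (c (i + 1)) := by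
  obtain ⟨m, rfl⟩ : ∃ m, n = m + 2 := ⟨n - 2, by omega⟩
  obtain ⟨t, ht⟩ := hodd
  set M : ℕ := ((b - a : Fin (m + 2))).val with hM
  have hMlt : M < m + 2 := (b - a).isLt
  obtain ⟨d, dir, hdir, hd1, hd2, hd3⟩ :
      ∃ (d : ℕ) (dir : ℤ), (dir = 1 ∨ dir = -1) ∧ d ≤ L ∧ Even ((L : ℤ) - d) ∧
        ((dir * d : ℤ) : Fin (m + 2)) = b - a := by
    by_cases h : Even ((L : ℤ) - M)
    · refine ⟨M, 1, Or.inl rfl, by omega, h, ?_⟩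
      push_cast
      simp [hM, Fin.cast_val_eq_self]
    · obtain ⟨s, hs⟩ := Int.not_even_iff_odd.mp h
      refine ⟨m + 2 - M, -1, Or.inr rfl, by omega, ⟨s + (M : ℤ) - t, by push_cast; omega⟩, ?_⟩
      have h1 : ((m + 2 - M : ℕ) : Fin (m + 2)) = -(M : Fin (m + 2)) := by
        rw [Nat.cast_sub (le_of_lt hMlt), Fin.natCast_self, zero_sub]
      push_cast
      rw [h1]
      simp [hM, Fin.cast_val_eq_self]
  set g : ℕ → ℕ := fun i => if i ≤ d then i else if Even (i - d) then d else d + 1 with hg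
  refine ⟨fun i => a + ((dir * g i : ℤ) : Fin (m + 2)), ?_, ?_, ?_⟩
  · simp [hg]
  · have hgL : g L = d := by
      rcases Nat.lt_or_ge L d with h | h
      · omega
      rcases Nat.eq_or_lt_of_le h with h' | h'
      · simp [hg, h'.symm]
      · have : Even (L - d) := by
          have : ((L - d : ℕ) : ℤ) = (L : ℤ) - d := by omega
          rw [← Int.even_coe_nat, this]
          exact hd2
        simp [hg, not_le.mpr h', this]
    show a + ((dir * g L : ℤ) : Fin (m + 2)) = b
    rw [hgL, hd3]
    ring
  · intro i hi
    show (cycleGraph (m + 2)).Adj (a + ((dir * g i : ℤ) : Fin (m + 2)))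
      (a + ((dir * g (i + 1) : ℤ) : Fin (m + 2)))
    have hstep : ((g (i + 1) : ℤ)) - g i = 1 ∨ ((g (i + 1) : ℤ)) - g i = -1 := by
      by_cases h1 : i + 1 ≤ d
      · rw [hg]; simp only [if_pos h1, if_pos (by omega : i ≤ d)]; left; push_cast; omega
      · by_cases h2 : i ≤ d
        · have hid : i = d := by omega
          have hodd1 : ¬ Even (i + 1 - d) := by
            rw [Nat.not_even_iff_odd]; exact ⟨0, by omega⟩
          rw [hg]; simp only [if_neg h1, if_pos h2, if_neg hodd1]; left; push_cast; omega
        · rcases Nat.even_or_odd (i - d) with he | ho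
          · have hodd1 : ¬ Even (i + 1 - d) := by
              rw [Nat.not_even_iff_odd]; obtain ⟨r, hr⟩ := he; exact ⟨r, by omega⟩
            rw [hg]; simp only [if_neg h1, if_neg h2, if_pos he, if_neg hodd1]
            left; push_cast; omega
          · have heven1 : Even (i + 1 - d) := by
              obtain ⟨r, hr⟩ := ho; exact ⟨r + 1, by omega⟩
            rw [hg]; simp only [if_neg h1, if_neg h2, if_pos heven1,
              if_neg (Nat.not_even_iff_odd.mpr ho)]
            right; push_cast; omega
    have hsub : (a + ((dir * g (i+1) : ℤ) : Fin (m + 2))) - (a + ((dir * g i : ℤ) : Fin (m + 2)))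
        = ((dir * ((g (i+1) : ℤ) - g i) : ℤ) : Fin (m + 2)) := by
      push_cast
      ring
    rw [cycleGraph_adj]
    rcases hdir with hD | hD <;> rcases hstep with hS | hS
    · right; rw [hsub, hD, hS]; norm_num
    · left; rw [show ∀ x y : Fin (m+2), x - y = -(y - x) by intro x y; ring, hsub, hD, hS]
      norm_num
    · left; rw [show ∀ x y : Fin (m+2), x - y = -(y - x) by intro x y; ring, hsub, hD, hS]
      norm_num
    · right; rw [hsub, hD, hS]; norm_num

lemma walk_getVert_eq_support_getElem {V : Type*} {G : SimpleGraph V} {u v : V}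
    (p : G.Walk u v) : ∀ i (h : i < p.support.length), p.getVert i = p.support[i] := by
  induction p with
  | nil => intro i h; simp only [Walk.support_nil, List.length_cons, List.length_nil] at h
           interval_cases i <;> simp [Walk.getVert]
  | cons hadj q ih =>
      intro i h
      cases i with
      | zero => simp [Walk.getVert]
      | succ j =>
          simp only [Walk.support_cons, List.length_cons] at h
          rw [Walk.getVert_cons_succ, ih j (by omega)]
          simp

lemma path_getVert_injOn {V : Type*} {G : SimpleGraph V} {u v : V}
    {p : G.Walk u v} (hp : p.IsPath) :
    ∀ i, i ≤ p.length → ∀ j, j ≤ p.length → p.getVert i = p.getVert j → i = j := by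
  intro i hi j hj hij
  have hi' : i < p.support.length := by rw [Walk.length_support]; omega
  have hj' : j < p.support.length := by rw [Walk.length_support]; omega
  rw [walk_getVert_eq_support_getElem p i hi', walk_getVert_eq_support_getElem p j hj'] at hij
  exact (hp.support_nodup.getElem_inj_iff).mp hij

/-- If `H = C_n` is an odd cycle and `G` is an `H`-critical graph, then
`G` contains no `k`-string with `k ≥ n - 2` (a `k`-string has `k` internal vertices,
i.e. length `k+1`). -/
theorem hCritical_no_long_string (n : ℕ) (hodd : Odd n) (h3 : 3 ≤ n)
    {V : Type} [Fintype V] (G : SimpleGraph V) [DecidableRel G.Adj]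
    (hcrit : HCritical G (cycleGraph n)) :
    ∀ (k : ℕ), n - 2 ≤ k → ∀ (u v : V) (p : G.Walk u v),
      p.length = k + 1 → ¬ IsString G p := by
  classical
  intro k hk u v p hlen hs
  obtain ⟨hpath, hdu, hdv, hdeg⟩ := hs
  have hk1 : 1 ≤ k := by omega
  have hinj : ∀ i, i ≤ k + 1 → ∀ j, j ≤ k + 1 → p.getVert i = p.getVert j → i = j := by
    intro i hi j hj h
    exact path_getVert_injOn hpath i (by omega) j (by omega) h
  have hadj01 : G.Adj u (p.getVert 1) := by
    have h0 := p.adj_getVert_succ (show 0 < p.length by omega)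
    rwa [p.getVert_zero] at h0
  let G' : G.Subgraph :=
    ⟨Set.univ, fun x y => G.Adj x y ∧ s(x, y) ≠ s(u, p.getVert 1),
      fun h => h.1, fun _ => Set.mem_univ _,
      ⟨fun x y h => ⟨h.1.symm, by rw [Sym2.eq_swap]; exact h.2⟩⟩⟩
  have hne : G' ≠ ⊤ := by
    intro h
    have h2 : G'.Adj u (p.getVert 1) := by
      rw [h]
      exact Subgraph.top_adj.mpr hadj01
    exact h2.2 rfl
  obtain ⟨f0⟩ := hcrit.2 G' hne
  let f : V → Fin n := fun x => f0 ⟨x, Set.mem_univ x⟩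
  have hf : ∀ x y, G.Adj x y → s(x, y) ≠ s(u, p.getVert 1) →
      (cycleGraph n).Adj (f x) (f y) := by
    intro x y h1 h2
    exact f0.map_adj (show G'.coe.Adj ⟨x, _⟩ ⟨y, _⟩ from ⟨h1, h2⟩)
  obtain ⟨c, hc0, hcL, hcadj⟩ := cycle_walk_seq n hodd h3 (f u) (f v) (k + 1) (by omega)
  let P : V → Prop := fun x => ∃ i, 1 ≤ i ∧ i ≤ k ∧ p.getVert i = x
  let F : V → Fin n := fun x => if h : P x then c (Classical.choose h) else f x
  have hFpos : ∀ x (h : P x), F x = c (Classical.choose h) := fun x h => dif_pos h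
  have hFneg : ∀ x, ¬ P x → F x = f x := fun x h => dif_neg h
  have keyInt : ∀ i, 1 ≤ i → i ≤ k → F (p.getVert i) = c i := by
    intro i h1 h2
    have hPx : P (p.getVert i) := ⟨i, h1, h2, rfl⟩
    have hspec := Classical.choose_spec hPx
    have he : Classical.choose hPx = i :=
      hinj _ (by omega) i (by omega) hspec.2.2
    rw [hFpos _ hPx, he]
  have hPu : ¬ P u := by
    rintro ⟨i, h1, h2, hgi⟩
    have : i = 0 := hinj i (by omega) 0 (by omega) (by rw [hgi, p.getVert_zero])
    omega
  have hPv : ¬ P v := by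
    rintro ⟨i, h1, h2, hgi⟩
    have hgv : p.getVert (k + 1) = v := by
      rw [← hlen]; exact p.getVert_length
    have : i = k + 1 := hinj i (by omega) (k + 1) (by omega) (by rw [hgi, hgv])
    omega
  have hFu : F u = c 0 := by rw [hFneg u hPu, hc0]
  have hFv : F v = c (k + 1) := by rw [hFneg v hPv, hcL]
  have hPw1 : P (p.getVert 1) := ⟨1, le_refl 1, hk1, rfl⟩
  have hmain : ∀ x y, G.Adj x y → P x → (cycleGraph n).Adj (F x) (F y) := by
    intro x y hxy hPx
    obtain ⟨i, h1, h2, hgi⟩ := hPx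
    have hxu : x ≠ u := by
      intro h
      have : i = 0 := hinj i (by omega) 0 (by omega) (by rw [hgi, p.getVert_zero, h])
      omega
    have hxv : x ≠ v := by
      intro h
      have hgv : p.getVert (k + 1) = v := by rw [← hlen]; exact p.getVert_length
      have : i = k + 1 := hinj i (by omega) (k + 1) (by omega) (by rw [hgi, hgv, h])
      omega
    have hxsupp : x ∈ p.support :=
      Walk.mem_support_iff_exists_getVert.mpr ⟨i, hgi, by omega⟩
    have hdeg2 : G.degree x = 2 := hdeg x hxsupp hxu hxv
    have hadjn1 : G.Adj x (p.getVert (i - 1)) := by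
      have h' := p.adj_getVert_succ (show i - 1 < p.length by omega)
      rw [show i - 1 + 1 = i from by omega, hgi] at h'
      exact h'.symm
    have hadjn2 : G.Adj x (p.getVert (i + 1)) := by
      rw [← hgi]
      exact p.adj_getVert_succ (by omega)
    have hn12 : p.getVert (i - 1) ≠ p.getVert (i + 1) := by
      intro h
      have := hinj (i - 1) (by omega) (i + 1) (by omega) h
      omega
    have hy : y = p.getVert (i - 1) ∨ y = p.getVert (i + 1) := by
      have hsub : ({p.getVert (i - 1), p.getVert (i + 1)} : Finset V) ⊆
          G.neighborFinset x := by
        intro z hz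
        rw [Finset.mem_insert, Finset.mem_singleton] at hz
        rcases hz with rfl | rfl
        · exact (mem_neighborFinset G x _).mpr hadjn1
        · exact (mem_neighborFinset G x _).mpr hadjn2
      have heq := Finset.eq_of_subset_of_card_le hsub
        (by rw [card_neighborFinset_eq_degree, hdeg2, Finset.card_pair hn12])
      have hymem : y ∈ G.neighborFinset x := (mem_neighborFinset G x y).mpr hxy
      rw [← heq, Finset.mem_insert, Finset.mem_singleton] at hymem
      exact hymem
    have hFx : F x = c i := by rw [← hgi]; exact keyInt i h1 h2
    rcases hy with rfl | rfl
    · have hFy : F (p.getVert (i - 1)) = c (i - 1) := by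
        by_cases h' : i = 1
        · have : p.getVert (i - 1) = u := by rw [h']; exact p.getVert_zero
          rw [this, hFu, show i - 1 = 0 from by omega]
        · exact keyInt (i - 1) (by omega) (by omega)
      rw [hFx, hFy]
      have h' := hcadj (i - 1) (by omega)
      rw [show i - 1 + 1 = i from by omega] at h'
      exact h'.symm
    · have hFy : F (p.getVert (i + 1)) = c (i + 1) := by
        by_cases h' : i = k
        · have hgv : p.getVert (i + 1) = v := by
            rw [h', ← hlen]; exact p.getVert_length
          rw [hgv, hFv, h']
        · exact keyInt (i + 1) (by omega) (by omega)
      rw [hFx, hFy]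
      exact hcadj i (by omega)
  have hhom : ∀ {x y : V}, G.Adj x y → (cycleGraph n).Adj (F x) (F y) := by
    intro x y hxy
    by_cases hPx : P x
    · exact hmain x y hxy hPx
    by_cases hPy : P y
    · exact (hmain y x hxy.symm hPy).symm
    rw [hFneg x hPx, hFneg y hPy]
    apply hf x y hxy
    intro hcontra
    rw [Sym2.eq_iff] at hcontra
    rcases hcontra with ⟨_, rfl⟩ | ⟨rfl, _⟩
    · exact hPy hPw1
    · exact hPx hPw1
  exact hcrit.1 ⟨⟨F, fun {a b} h => hhom h⟩⟩
end

section
/- Let H be an odd cycle and G an H-critical graph. If u and v are the endpoints of two distinct strings S_1 (a k_1-string) and S_2 (a k_2-string) in G, then k_1 and k_2 have different parities (k_1 ≢ k_2 mod 2). -/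
open SimpleGraph

section Helpers

variable {V : Type} {G : SimpleGraph V}

/-- A vertex of a walk indexed by `getVert` is in the support. -/
lemma getVert_mem_support' {a b : V} (p : G.Walk a b) {i : ℕ} (hi : i ≤ p.length) :
    p.getVert i ∈ p.support :=
  Walk.mem_support_iff_exists_getVert.mpr ⟨i, rfl, hi⟩

/-- `getVert` is injective on paths (up to length). -/
lemma getVert_inj {a b : V} {p : G.Walk a b} (hp : p.IsPath) :
    ∀ {i j : ℕ}, i ≤ p.length → j ≤ p.length → p.getVert i = p.getVert j → i = j := by
  induction p with
  | nil =>
    intro i j hi hj _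
    simp only [Walk.length_nil, Nat.le_zero] at hi hj
    omega
  | cons h q ih =>
    rename_i x y hadj
    intro i j hi hj hij
    rw [Walk.cons_isPath_iff] at hp
    match i, j with
    | 0, 0 => rfl
    | 0, j + 1 =>
      exfalso
      simp only [Walk.getVert_zero, Walk.getVert_cons_succ] at hij
      exact hp.2 (hij ▸ getVert_mem_support' q (by simpa using hj))
    | i + 1, 0 =>
      exfalso
      simp only [Walk.getVert_zero, Walk.getVert_cons_succ] at hij
      exact hp.2 (hij ▸ getVert_mem_support' q (by simpa using hi))
    | i + 1, j + 1 =>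
      simp only [Walk.getVert_cons_succ] at hij
      have := ih hp.1 (by simpa using hi) (by simpa using hj) hij
      omega

/-- Every edge of a walk is of the form `s(getVert i, getVert (i+1))`. -/
lemma edges_index {a b : V} (p : G.Walk a b) {e : Sym2 V} (he : e ∈ p.edges) :
    ∃ i < p.length, e = s(p.getVert i, p.getVert (i + 1)) := by
  induction p with
  | nil => simp at he
  | cons h q ih =>
    rename_i x y hadj
    rw [Walk.edges_cons, List.mem_cons] at he
    rcases he with he | he
    · exact ⟨0, by simp, by simpa using he⟩
    · obtain ⟨i, hi, hei⟩ := ih he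
      exact ⟨i + 1, by simpa using hi, by simpa using hei⟩

lemma getVert_edge_mem {a b : V} (p : G.Walk a b) {i : ℕ} (hi : i < p.length) :
    s(p.getVert i, p.getVert (i + 1)) ∈ p.edges := by
  induction p generalizing i with
  | nil => simp at hi
  | cons h q ih =>
    rename_i x y hadj
    match i with
    | 0 => simp
    | i + 1 =>
      simp only [Walk.getVert_cons_succ, Walk.edges_cons, List.mem_cons]
      exact Or.inr (ih (by simpa using hi))

/-- In a graph, a degree-2 vertex with two distinct neighbours `a`, `b` has no other
neighbours. -/
lemma two_neighbors [Fintype V] [DecidableRel G.Adj] {x a b c : V}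
    (hdeg : G.degree x = 2) (ha : G.Adj x a) (hb : G.Adj x b) (hab : a ≠ b)
    (hc : G.Adj x c) : c = a ∨ c = b := by
  classical
  have hsub : ({a, b} : Finset V) ⊆ G.neighborFinset x := by
    intro z hz
    rw [Finset.mem_insert, Finset.mem_singleton] at hz
    rcases hz with rfl | rfl <;> simp [ha, hb]
  have hcard : ({a, b} : Finset V).card = 2 := by
    rw [Finset.card_insert_of_notMem (by simpa using hab), Finset.card_singleton]
  have : G.neighborFinset x = ({a, b} : Finset V) := by
    exact (Finset.eq_of_subset_of_card_le hsub
      (by rw [hcard, ← hdeg, SimpleGraph.card_neighborFinset_eq_degree])).symm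
  have hcmem : c ∈ ({a, b} : Finset V) := this ▸ (by simpa using hc)
  simpa using hcmem

/-- Two paths between the same endpoints, the first of which has all internal vertices of
degree 2, that share their second vertex, are equal. -/
lemma path_eq_of_snd_eq [Fintype V] [DecidableRel G.Adj] :
    ∀ (L : ℕ) {u v : V} (p q : G.Walk u v), p.length ≤ L → p.IsPath → q.IsPath →
      (∀ w ∈ p.support, w ≠ u → w ≠ v → G.degree w = 2) →
      ¬ p.Nil → ¬ q.Nil → p.getVert 1 = q.getVert 1 → p = q := by
  intro L
  induction L with
  | zero =>
    intro u v p q hlen hp hq _ hpn _ _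
    exact absurd (Walk.nil_iff_length_eq.mpr (Nat.le_zero.mp hlen)) hpn
  | succ L ih =>
    intro u v p q hlen hp hq hdeg hpn hqn hsnd
    cases p with
    | nil => simp at hpn
    | cons hp' p' =>
      cases q with
      | nil => simp at hqn
      | cons hq' q' =>
        rename_i x y
        have hxy : x = y := by simpa using hsnd
        subst hxy
        have hppath : p'.IsPath := hp.of_cons
        have hqpath : q'.IsPath := hq.of_cons
        have hup' : u ∉ p'.support := (Walk.cons_isPath_iff _ _).mp hp |>.2
        have huq' : u ∉ q'.support := (Walk.cons_isPath_iff _ _).mp hq |>.2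
        by_cases hxv : x = v
        · subst hxv
          have hp'nil : p' = Walk.nil := (Walk.isPath_iff_eq_nil).mp hppath
          have hq'nil : q' = Walk.nil := (Walk.isPath_iff_eq_nil).mp hqpath
          subst hp'nil; subst hq'nil
          rfl
        · cases p' with
          | nil => exact absurd rfl hxv
          | cons hp'' p'' =>
            cases q' with
            | nil => exact absurd rfl hxv
            | cons hq'' q'' =>
              rename_i x₂ y₂
              have hxdeg : G.degree x = 2 := by
                refine hdeg x (by simp) ?_ hxv
                intro h; exact hup' (h ▸ (by simp : x ∈ (Walk.cons hp'' p'').support))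
              have hx₂ : x₂ ∈ (Walk.cons hp'' p'').support := by simp
              have hy₂ : y₂ ∈ (Walk.cons hq'' q'').support := by simp
              have hux₂ : u ≠ x₂ := fun h => hup' (h ▸ hx₂)
              have huy₂ : u ≠ y₂ := fun h => huq' (h ▸ hy₂)
              have : y₂ = u ∨ y₂ = x₂ :=
                two_neighbors hxdeg hp'.symm hp'' hux₂ hq''
              have hy₂x₂ : y₂ = x₂ := this.resolve_left (fun h => huy₂ h.symm)
              subst hy₂x₂
              have key : Walk.cons hp'' p'' = Walk.cons hq'' q'' := by
                refine ih _ _ (by simpa using Nat.succ_le_succ_iff.mp hlen) hppath hqpath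
                  ?_ (by simp) (by simp) (by simp)
                intro w hw hwx hwv
                refine hdeg w (by simp [hw, List.mem_cons]; right; simpa using hw) ?_ hwv
                intro h; exact hup' (h ▸ hw)
              rw [key]

/-- Pad a walk by an even number of steps. -/
lemma pad_walk {W : Type} {C : SimpleGraph W} {a b : W} (hb : ∃ c, C.Adj b c)
    (w : C.Walk a b) (t : ℕ) : ∃ w' : C.Walk a b, w'.length = w.length + 2 * t := by
  induction t with
  | zero => exact ⟨w, by simp⟩
  | succ t ih =>
    obtain ⟨w', hw'⟩ := ih
    obtain ⟨c, hc⟩ := hb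
    exact ⟨(w'.concat hc).concat hc.symm, by simp [Walk.length_concat, hw']; omega⟩

/-- Map a walk avoiding the bad edges through an edge-preserving map. -/
lemma walk_of_map {W : Type} {C : SimpleGraph W} (f : V → W) (P : Sym2 V → Prop)
    (hf : ∀ x y, G.Adj x y → P s(x, y) → C.Adj (f x) (f y)) :
    ∀ {a b : V} (p : G.Walk a b), (∀ e ∈ p.edges, P e) →
      ∃ w : C.Walk (f a) (f b), w.length = p.length := by
  intro a b p
  induction p with
  | nil => exact fun _ => ⟨Walk.nil, rfl⟩
  | cons h q ih =>
    intro hP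
    obtain ⟨w, hw⟩ := ih (fun e he => hP e (by simp [he]))
    exact ⟨Walk.cons (hf _ _ h (hP _ (by simp))) w, by simp [hw]⟩

/-- Any edge at an internal vertex of a path whose internal vertices have degree 2
belongs to the path. -/
lemma interior_edge [Fintype V] [DecidableRel G.Adj] {u v : V} {p : G.Walk u v}
    (hp : p.IsPath) (hdeg : ∀ w ∈ p.support, w ≠ u → w ≠ v → G.degree w = 2)
    {i : ℕ} (h0 : 0 < i) (hl : i < p.length) {y : V} (hy : G.Adj (p.getVert i) y) :
    s(p.getVert i, y) ∈ p.edges := by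
  have hxu : p.getVert i ≠ u := by
    intro h
    have : i = 0 := getVert_inj hp hl.le (Nat.zero_le _) (by rw [h, Walk.getVert_zero])
    omega
  have hxv : p.getVert i ≠ v := by
    intro h
    have : i = p.length := getVert_inj hp hl.le le_rfl (by rw [h, Walk.getVert_length])
    omega
  have d2 : G.degree (p.getVert i) = 2 := hdeg _ (getVert_mem_support' p hl.le) hxu hxv
  have ha : G.Adj (p.getVert i) (p.getVert (i - 1)) := by
    have := p.adj_getVert_succ (i := i - 1) (by omega)
    rw [show i - 1 + 1 = i by omega] at this
    exact this.symm
  have hb : G.Adj (p.getVert i) (p.getVert (i + 1)) := p.adj_getVert_succ hl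
  have hab : p.getVert (i - 1) ≠ p.getVert (i + 1) := by
    intro h
    have := getVert_inj hp (by omega : i - 1 ≤ p.length) hl h
    omega
  rcases two_neighbors d2 ha hb hab hy with rfl | rfl
  · rw [Sym2.eq_swap]
    have := getVert_edge_mem p (i := i - 1) (by omega)
    rwa [show i - 1 + 1 = i by omega] at this
  · exact getVert_edge_mem p hl

end Helpers

lemma main_aux (n : ℕ) (h3 : 3 ≤ n)
    {V : Type} [Fintype V] (G : SimpleGraph V) [DecidableRel G.Adj]
    (hcrit : HCritical G (cycleGraph n))
    (u v : V) (p₁ p₂ : G.Walk u v)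
    (h₁ : IsString G p₁) (h₂ : IsString G p₂) (hne : p₁ ≠ p₂)
    (k₁ k₂ : ℕ) (hk₁ : p₁.length = k₁ + 1) (hk₂ : p₂.length = k₂ + 1)
    (hle : k₁ ≤ k₂) (hpar : k₁ % 2 = k₂ % 2) : False := by
  classical
  obtain ⟨m, rfl⟩ : ∃ m, n = m + 3 := ⟨n - 3, by omega⟩
  have hadjC : ∀ a : Fin (m + 3), ∃ c, (cycleGraph (m + 3)).Adj a c := by
    intro a
    refine ⟨a + 1, ?_⟩
    rw [cycleGraph_adj]
    right
    exact add_sub_cancel_left a 1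
  have hlen₂ : 0 < p₂.length := by omega
  set w₂ := p₂.getVert 1 with hw₂def
  have hadj₂ : G.Adj u w₂ := by
    have := p₂.adj_getVert_succ (i := 0) hlen₂
    simpa using this
  -- remove the first edge of p₂
  set Gd : G.Subgraph := (⊤ : G.Subgraph).deleteEdges {s(u, w₂)} with hGddef
  have hGdne : Gd ≠ ⊤ := by
    intro h
    have h1 : Gd.Adj u w₂ := by rw [h]; exact Subgraph.top_adj.mpr hadj₂
    rw [hGddef, Subgraph.deleteEdges_adj] at h1
    exact h1.2 (by simp)
  obtain ⟨φ⟩ := hcrit.2 Gd hGdne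
  let Φ : V → Fin (m + 3) := fun x =>
    φ ⟨x, by simp [hGddef, Subgraph.deleteEdges_verts, Subgraph.verts_top]⟩
  have hΦ : ∀ x y, G.Adj x y → s(x, y) ≠ s(u, w₂) →
      (cycleGraph (m + 3)).Adj (Φ x) (Φ y) := by
    intro x y hxy hs
    apply φ.map_adj
    show Gd.coe.Adj _ _
    rw [Subgraph.coe_adj]
    show ((⊤ : G.Subgraph).deleteEdges {s(u, w₂)}).Adj x y
    rw [Subgraph.deleteEdges_adj]
    exact ⟨Subgraph.top_adj.mpr hxy, by simpa using hs⟩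
  -- the two strings have different second vertices
  have hw₁₂ : p₁.getVert 1 ≠ w₂ := by
    intro h
    exact hne (path_eq_of_snd_eq p₁.length p₁ p₂ le_rfl h₁.1 h₂.1 h₁.2.2.2
      (Walk.not_nil_iff_lt_length.mpr (by omega))
      (Walk.not_nil_iff_lt_length.mpr (by omega)) h)
  -- no edge of p₁ is the removed edge
  have hedges₁ : ∀ e ∈ p₁.edges, e ≠ s(u, w₂) := by
    intro e he h
    subst h
    obtain ⟨i, hi, heq⟩ := edges_index p₁ he
    rw [Sym2.eq_iff] at heq
    rcases heq with ⟨h1, h2⟩ | ⟨h1, h2⟩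
    · have hi0 : i = 0 :=
        getVert_inj h₁.1 hi.le (Nat.zero_le _) (by rw [← h1, Walk.getVert_zero])
      subst hi0
      exact hw₁₂ h2.symm
    · have : i + 1 = 0 :=
        getVert_inj h₁.1 hi (Nat.zero_le _) (by rw [← h1, Walk.getVert_zero])
      omega
  -- a walk of length k₁+1 in the cycle from Φ u to Φ v
  obtain ⟨W₁, hW₁len⟩ := walk_of_map Φ (fun e => e ≠ s(u, w₂)) hΦ p₁ hedges₁
  obtain ⟨t, ht⟩ : ∃ t, k₂ + 1 = (k₁ + 1) + 2 * t := ⟨(k₂ - k₁) / 2, by omega⟩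
  obtain ⟨W, hWlen⟩ := pad_walk (hadjC (Φ v)) W₁ t
  have hWlen' : W.length = p₂.length := by rw [hWlen, hW₁len, hk₁, hk₂]; omega
  -- reroute p₂ through the cycle walk W
  let ψ : V → Fin (m + 3) := fun x =>
    if h : ∃ i, 0 < i ∧ i < p₂.length ∧ p₂.getVert i = x then W.getVert h.choose else Φ x
  have hψgv : ∀ i ≤ p₂.length, ψ (p₂.getVert i) = W.getVert i := by
    intro i hi
    by_cases h : ∃ j, 0 < j ∧ j < p₂.length ∧ p₂.getVert j = p₂.getVert i
    · rw [show ψ (p₂.getVert i) = W.getVert h.choose from dif_pos h]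
      obtain ⟨h1, h2, h3⟩ := h.choose_spec
      rw [getVert_inj h₂.1 h2.le hi h3]
    · have hΦeq : ψ (p₂.getVert i) = Φ (p₂.getVert i) := dif_neg h
      have hi' : i = 0 ∨ i = p₂.length := by
        by_contra hc
        push_neg at hc
        exact h ⟨i, by omega, by omega, rfl⟩
      rcases hi' with rfl | rfl
      · rw [hΦeq, Walk.getVert_zero, Walk.getVert_zero]
      · rw [hΦeq, Walk.getVert_length, ← hWlen', Walk.getVert_length]
  have hψnot : ∀ x, ¬(∃ i, 0 < i ∧ i < p₂.length ∧ p₂.getVert i = x) → ψ x = Φ x :=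
    fun x h => dif_neg h
  have he₀ : s(u, w₂) ∈ p₂.edges := by
    have := getVert_edge_mem p₂ (i := 0) hlen₂
    simpa using this
  have hhom : ∀ x y, G.Adj x y → (cycleGraph (m + 3)).Adj (ψ x) (ψ y) := by
    intro x y hxy
    by_cases he : s(x, y) ∈ p₂.edges
    · obtain ⟨i, hi, heq⟩ := edges_index p₂ he
      have hadjW : (cycleGraph (m + 3)).Adj (W.getVert i) (W.getVert (i + 1)) :=
        W.adj_getVert_succ (by rw [hWlen']; exact hi)
      rw [Sym2.eq_iff] at heq
      rcases heq with ⟨hx, hy⟩ | ⟨hx, hy⟩ <;> subst hx <;> subst hy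
      · rw [hψgv i hi.le, hψgv (i + 1) hi]
        exact hadjW
      · rw [hψgv i hi.le, hψgv (i + 1) hi]
        exact hadjW.symm
    · have hx : ¬∃ i, 0 < i ∧ i < p₂.length ∧ p₂.getVert i = x := by
        rintro ⟨i, h0, hl, rfl⟩
        exact he (interior_edge h₂.1 h₂.2.2.2 h0 hl hxy)
      have hy : ¬∃ i, 0 < i ∧ i < p₂.length ∧ p₂.getVert i = y := by
        rintro ⟨i, h0, hl, rfl⟩
        apply he
        rw [Sym2.eq_swap]
        exact interior_edge h₂.1 h₂.2.2.2 h0 hl hxy.symm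
      rw [hψnot x hx, hψnot y hy]
      exact hΦ x y hxy (fun h => he (h ▸ he₀))
  exact hcrit.1 ⟨⟨ψ, fun {a b} h => hhom a b h⟩⟩

/-- Let `H = C_n` be an odd cycle and `G` an `H`-critical graph.  If `u`
and `v` are the common endpoints of two distinct strings, a `k₁`-string and a
`k₂`-string, then `k₁ ≢ k₂ (mod 2)`. -/
theorem parallel_strings_opposite_parity (n : ℕ) (hodd : Odd n) (h3 : 3 ≤ n)
    {V : Type} [Fintype V] (G : SimpleGraph V) [DecidableRel G.Adj]
    (hcrit : HCritical G (cycleGraph n))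
    (u v : V) (p₁ p₂ : G.Walk u v)
    (h₁ : IsString G p₁) (h₂ : IsString G p₂) (hne : p₁ ≠ p₂)
    (k₁ k₂ : ℕ) (hk₁ : p₁.length = k₁ + 1) (hk₂ : p₂.length = k₂ + 1) :
    ¬ (k₁ % 2 = k₂ % 2) := by
  intro hpar
  rcases le_total k₁ k₂ with h | h
  · exact main_aux n h3 G hcrit u v p₁ p₂ h₁ h₂ hne k₁ k₂ hk₁ hk₂ h hpar
  · exact main_aux n h3 G hcrit u v p₂ p₁ h₂ h₁ (Ne.symm hne) k₂ k₁ hk₂ hk₁ h hpar.symm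
end

section
/- Let t ≥ 1 and let G be a C_{2t+1}-critical graph. If C is a (2t+1)-cycle in G and S is a string of G not contained in C, then at most one endpoint of S lies in V(C). -/
open SimpleGraph

namespace StringCellAux

open SimpleGraph Walk

variable {V : Type} {G : SimpleGraph V}

lemma cycle_walk_int {m : ℕ} {a b : Fin (m+3)} (W : (cycleGraph (m+3)).Walk a b) :
    ∃ k : ℤ, ((a : ZMod (m+3)) - (b : ZMod (m+3)) = (k : ZMod (m+3))) ∧
      k.natAbs ≤ W.length ∧ Even (k + W.length) := by
  induction W with
  | nil => exact ⟨0, by simp; rfl, by simp, by simp⟩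
  | @cons a a' b h W ih =>
    obtain ⟨k, hk, hle, hpar⟩ := ih
    rw [cycleGraph_adj (n := m+1)] at h
    rcases h with h | h
    · refine ⟨1 + k, ?_, ?_, ?_⟩
      · have h1 : (a : ZMod (m+3)) - (a' : ZMod (m+3)) = 1 := h
        push_cast
        rw [← hk]; exact (by rw [← h, sub_add_sub_cancel] : a - b = 1 + (a' - b))
      · calc (1+k).natAbs ≤ 1 + k.natAbs := by omega
          _ ≤ _ := by rw [Walk.length_cons]; omega
      · rw [Walk.length_cons]
        push_cast
        have : (1 + k) + (W.length + 1) = (k + W.length) + 2 := by ring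
        rw [this]
        exact hpar.add (by norm_num)
    · refine ⟨-1 + k, ?_, ?_, ?_⟩
      · have h1 : (a' : ZMod (m+3)) - (a : ZMod (m+3)) = 1 := h
        push_cast
        rw [← hk]
        have : a - a' = -1 := by rw [← h, neg_sub]
        exact (by rw [← this, sub_add_sub_cancel] : a - b = -1 + (a' - b))
      · calc (-1+k).natAbs ≤ 1 + k.natAbs := by omega
          _ ≤ _ := by rw [Walk.length_cons]; omega
      · rw [Walk.length_cons]
        push_cast
        have : (-1 + k) + (W.length + 1) = (k + W.length) := by ring
        rw [this]
        exact hpar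

lemma no_short_odd_closed_walk {n : ℕ} (hn : 3 ≤ n) {a : Fin n} (W : (cycleGraph n).Walk a a)
    (hodd : Odd W.length) : n ≤ W.length := by
  obtain ⟨m, rfl⟩ : ∃ m, n = m + 3 := ⟨n - 3, by omega⟩
  by_contra hlt
  obtain ⟨k, hk, hle, hpar⟩ := cycle_walk_int W
  replace hk : (0 : ZMod (m+3)) = (k : ZMod (m+3)) := by rw [← hk]; exact (sub_self _).symm
  rw [eq_comm] at hk
  have hdvd : ((m+3 : ℕ) : ℤ) ∣ k := by
    rwa [ZMod.intCast_zmod_eq_zero_iff_dvd] at hk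
  obtain ⟨c, rfl⟩ := hdvd
  have hc : c = 0 := by
    rcases Nat.lt_or_ge W.length (m+3) with h | h
    · by_contra hc0
      have : (m+3 : ℕ) ≤ (((m+3 : ℕ) : ℤ) * c).natAbs := by
        rw [Int.natAbs_mul]
        have : 1 ≤ c.natAbs := by omega
        calc (m+3) = (m+3) * 1 := by ring
          _ ≤ _ := by
            apply Nat.mul_le_mul _ this
            omega
      omega
    · omega
  subst hc
  rw [mul_zero, zero_add, Int.even_coe_nat, Nat.even_iff] at hpar
  rw [Nat.odd_iff] at hodd
  omega
lemma exists_walk_length {n : ℕ} (hn : 3 ≤ n) {a b : Fin n} (W : (cycleGraph n).Walk a b)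
    {L : ℕ} (hge : W.length ≤ L) (hpar : L % 2 = W.length % 2) :
    ∃ W' : (cycleGraph n).Walk a b, W'.length = L := by
  obtain ⟨m, rfl⟩ : ∃ m, n = m + 3 := ⟨n - 3, by omega⟩
  obtain ⟨j, rfl⟩ : ∃ j, L = W.length + 2*j := ⟨(L - W.length)/2, by omega⟩
  clear hge hpar
  induction j with
  | zero => exact ⟨W, by omega⟩
  | succ j ih =>
    obtain ⟨W', hW'⟩ := ih
    have hb : (cycleGraph (m+3)).Adj b (b+1) := by
      rw [cycleGraph_adj (n := m+1)]
      exact Or.inr (add_sub_cancel_left _ _)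
    exact ⟨W'.append (Walk.cons hb (Walk.cons hb.symm Walk.nil)), by
      rw [Walk.length_append, hW']
      simp; omega⟩

lemma end_mem_tail_support {a b : V} (W : G.Walk a b) (h : ¬W.Nil) : b ∈ W.support.tail := by
  cases W with
  | nil => simp at h
  | cons h' q => simp only [Walk.support_cons, List.tail_cons]; exact q.end_mem_support

lemma start_edge_eq {u v b : V} {p : G.Walk u v} (hp : p.IsPath)
    (hb : s(u, b) ∈ p.edges) : b = p.getVert 1 := by
  cases p with
  | nil => simp at hb
  | @cons _ w _ h q =>
    rw [Walk.edges_cons, List.mem_cons] at hb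
    rcases hb with heq | hmem
    · rw [Sym2.eq_iff] at heq
      rcases heq with ⟨-, rfl⟩ | ⟨rfl, rfl⟩
      · simp [Walk.getVert_cons_succ]
      · exact absurd rfl h.ne
    · exact absurd (Walk.fst_mem_support_of_mem_edges q hmem)
        ((Walk.cons_isPath_iff _ _).mp hp).2

lemma indexOf_start [DecidableEq V] {u v : V} (p : G.Walk u v) :
    p.support.idxOf u = 0 := by
  rw [p.support_eq_cons, List.idxOf_cons_self]

lemma indexOf_end [DecidableEq V] {u v : V} {p : G.Walk u v} (hp : p.IsPath) :
    p.support.idxOf v = p.length := by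
  induction p with
  | nil => simp
  | @cons x y z h q ih =>
    have hvu : x ≠ z := by
      rintro rfl
      exact ((Walk.cons_isPath_iff _ _).mp hp).2 q.end_mem_support
    rw [Walk.support_cons, Walk.length_cons, List.idxOf_cons_ne _ hvu,
      ih ((Walk.cons_isPath_iff _ _).mp hp).1]

lemma edge_indexOf [DecidableEq V] {u v a b : V} {p : G.Walk u v} (hp : p.IsPath)
    (hab : s(a, b) ∈ p.edges) :
    p.support.idxOf b = p.support.idxOf a + 1 ∨
      p.support.idxOf a = p.support.idxOf b + 1 := by
  induction p with
  | nil => simp at hab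
  | @cons u w _ h q ih =>
    rw [Walk.edges_cons, List.mem_cons] at hab
    rw [Walk.support_cons]
    rcases hab with heq | hmem
    · rw [Sym2.eq_iff] at heq
      rcases heq with ⟨rfl, rfl⟩ | ⟨rfl, rfl⟩
      · left
        rw [List.idxOf_cons_self, List.idxOf_cons_ne _ h.ne,
          q.support_eq_cons, List.idxOf_cons_self]
      · right
        rw [List.idxOf_cons_self, List.idxOf_cons_ne _ h.ne,
          q.support_eq_cons, List.idxOf_cons_self]
    · have hu : u ∉ q.support := ((Walk.cons_isPath_iff _ _).mp hp).2
      have ha : a ≠ u := by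
        rintro rfl; exact hu (Walk.fst_mem_support_of_mem_edges q hmem)
      have hb : b ≠ u := by
        rintro rfl; exact hu (Walk.snd_mem_support_of_mem_edges q hmem)
      rw [List.idxOf_cons_ne _ (Ne.symm ha), List.idxOf_cons_ne _ (Ne.symm hb)]
      rcases ih ((Walk.cons_isPath_iff _ _).mp hp).1 hmem with h' | h'
      · left; omega
      · right; omega

lemma interior_two_edges {u v a : V} {p : G.Walk u v} (hp : p.IsPath) (ha : a ∈ p.support)
    (hau : a ≠ u) (hav : a ≠ v) :
    ∃ b c, b ≠ c ∧ s(a, b) ∈ p.edges ∧ s(a, c) ∈ p.edges := by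
  induction p with
  | nil => rw [Walk.support_nil, List.mem_singleton] at ha; exact absurd ha hau
  | @cons u w _ h q ih =>
    rw [Walk.support_cons, List.mem_cons] at ha
    rcases ha with rfl | haq
    · exact absurd rfl hau
    by_cases haw : a = w
    · subst haw
      cases q with
      | nil => exact absurd rfl hav
      | @cons _ y _ h2 r =>
        refine ⟨u, y, ?_, ?_, ?_⟩
        · rintro rfl
          exact ((Walk.cons_isPath_iff _ _).mp hp).2 (by simp)
        · rw [Walk.edges_cons, Sym2.eq_swap]
          exact List.mem_cons_self
        · rw [Walk.edges_cons]
          exact List.mem_cons_of_mem _ (by simp)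
    · obtain ⟨b, c, hbc, h1, h2⟩ :=
        ih ((Walk.cons_isPath_iff _ _).mp hp).1 haq haw hav
      exact ⟨b, c, hbc, List.mem_cons_of_mem _ h1, List.mem_cons_of_mem _ h2⟩

lemma interior_adj_mem_edges [Fintype V] [DecidableRel G.Adj] {u v a b : V} {p : G.Walk u v}
    (hp : p.IsPath) (ha : a ∈ p.support) (hau : a ≠ u) (hav : a ≠ v)
    (hdeg : G.degree a = 2) (hab : G.Adj a b) : s(a, b) ∈ p.edges := by
  classical
  obtain ⟨b', c', hbc, hb', hc'⟩ := interior_two_edges hp ha hau hav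
  by_contra hnb
  have hbb' : b ≠ b' := fun h => hnb (h ▸ hb')
  have hbc' : b ≠ c' := fun h => hnb (h ▸ hc')
  have hsub : ({b, b', c'} : Finset V) ⊆ G.neighborFinset a := by
    intro x hx
    rw [Finset.mem_insert, Finset.mem_insert, Finset.mem_singleton] at hx
    rw [mem_neighborFinset]
    rcases hx with rfl | rfl | rfl
    · exact hab
    · exact p.adj_of_mem_edges hb'
    · exact p.adj_of_mem_edges hc'
  have h3 : ({b, b', c'} : Finset V).card = 3 := by
    rw [Finset.card_insert_of_notMem (by simp [hbb', hbc']),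
      Finset.card_insert_of_notMem (by simp [hbc]), Finset.card_singleton]
  have hle := Finset.card_le_card hsub
  rw [h3] at hle
  have hdeg' : (G.neighborFinset a).card = 2 := hdeg
  omega

lemma takeUntil_cons [DecidableEq V] {x y z v : V} (h : G.Adj x y) (q : G.Walk y z)
    (hv : v ∈ (Walk.cons h q).support) (hxv : x ≠ v) (hvq : v ∈ q.support) :
    (Walk.cons h q).takeUntil v hv = Walk.cons h (q.takeUntil v hvq) ∧
    (Walk.cons h q).dropUntil v hv = q.dropUntil v hvq := by
  constructor
  · rw [Walk.takeUntil]
    rw [dif_neg hxv]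
  · rw [Walk.dropUntil]
    rw [dif_neg hxv]

lemma cycle_arc_paths [DecidableEq V] {u v : V} {c : G.Walk u u} (hc : c.IsCycle)
    (hv : v ∈ c.support) (hvu : v ≠ u) :
    (c.takeUntil v hv).IsPath ∧ (c.dropUntil v hv).IsPath := by
  cases c with
  | nil => rw [Walk.support_nil, List.mem_singleton] at hv; exact absurd hv hvu
  | @cons _ w _ h q =>
    have hq : q.IsPath := by
      refine ⟨hc.isTrail.of_cons, ?_⟩
      have := hc.support_nodup
      rwa [Walk.support_cons, List.tail_cons] at this
    have hvq : v ∈ q.support := by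
      rw [Walk.support_cons, List.mem_cons] at hv
      rcases hv with rfl | h'
      · exact absurd rfl hvu
      · exact h'
    have hux : u ≠ v := Ne.symm hvu
    obtain ⟨ht, hd⟩ := takeUntil_cons h q hv hux hvq
    have hu_not : u ∉ (q.takeUntil v hvq).support := by
      intro huc
      have hnodup := hq.support_nodup
      rw [← q.take_spec hvq, Walk.support_append] at hnodup
      have hdnil : ¬(q.dropUntil v hvq).Nil := Walk.not_nil_of_ne hvu
      have hu2 : u ∈ (q.dropUntil v hvq).support.tail :=
        end_mem_tail_support _ hdnil
      exact (List.disjoint_of_nodup_append hnodup) huc hu2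
    constructor
    · rw [ht]
      exact (hq.takeUntil hvq).cons hu_not
    · rw [hd]
      exact hq.dropUntil hvq

lemma hom_of_proper {W : Type} {H : SimpleGraph W}
    (hcrit : HCritical G H) {G₁ : SimpleGraph V} (hle : G₁ ≤ G) (hne : G₁ ≠ G) :
    Nonempty (G₁ →g H) := by
  have hne' : SimpleGraph.toSubgraph G₁ hle ≠ ⊤ := by
    intro h
    apply hne
    ext a b
    have h2 : (SimpleGraph.toSubgraph G₁ hle).Adj a b ↔ (⊤ : G.Subgraph).Adj a b := by rw [h]
    simpa using h2
  obtain ⟨φ⟩ := hcrit.2 _ hne'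
  exact ⟨φ.comp ⟨fun x => ⟨x, Set.mem_univ x⟩, fun hadj => hadj⟩⟩

end StringCellAux

open StringCellAux in
/-- Let `t ≥ 1` and `G` a `C_{2t+1}`-critical graph.  If `C` is a
`(2t+1)`-cycle in `G` and `S` is a string of `G` not contained in `C`, then at most
one endpoint of `S` lies in `V(C)`. -/
theorem string_not_both_endpoints_in_cell (t : ℕ) (ht : 1 ≤ t)
    {V : Type} [Fintype V] (G : SimpleGraph V) [DecidableRel G.Adj]
    (hcrit : HCritical G (cycleGraph (2 * t + 1)))
    (x : V) (c : G.Walk x x) (hc : c.IsCycle) (hlen : c.length = 2 * t + 1)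
    (u v : V) (p : G.Walk u v) (hp : IsString G p)
    (hnotsub : ¬ ∀ e ∈ p.edges, e ∈ c.edges) :
    ¬ (u ∈ c.support ∧ v ∈ c.support) := by
  classical
  rintro ⟨hu, hv⟩
  push_neg at hnotsub
  obtain ⟨e, hep, hec⟩ := hnotsub
  obtain ⟨hpp, hdu, hdv, hdeg⟩ := hp
  have hn3 : 3 ≤ 2 * t + 1 := by omega
  have huv : u ≠ v := by
    rintro rfl
    rw [(Walk.isPath_iff_eq_nil (p := p)).mp hpp] at hep
    simp at hep
  have key : ∀ H : SimpleGraph V, H ≤ G → H ≠ G →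
      Nonempty (H →g cycleGraph (2 * t + 1)) :=
    fun H hle hne => hom_of_proper hcrit hle hne
  -- rotate the cycle at u and split it into two arcs from u to v
  have hc' : (c.rotate u hu).IsCycle := hc.rotate hu
  have hvc' : v ∈ (c.rotate u hu).support := by
    have hvt : v ∈ c.support.tail := by
      rcases List.mem_cons.mp (by rwa [c.support_eq_cons] at hv) with rfl | h'
      · exact end_mem_tail_support c hc.not_nil
      · exact h'
    have h2 := (Walk.support_rotate c u hu).mem_iff.mpr hvt
    rw [(c.rotate u hu).support_eq_cons]
    exact List.mem_cons_of_mem _ h2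
  have hvu' : v ≠ u := Ne.symm huv
  obtain ⟨harc1, harc2⟩ := cycle_arc_paths hc' hvc' hvu'
  have hA2p : ((c.rotate u hu).dropUntil v hvc').reverse.IsPath := harc2.reverse
  have hlen12 : ((c.rotate u hu).takeUntil v hvc').length
      + ((c.rotate u hu).dropUntil v hvc').reverse.length = 2 * t + 1 := by
    have h1 := congrArg Walk.length ((c.rotate u hu).take_spec hvc')
    rw [Walk.length_append] at h1
    have h2 : (c.rotate u hu).length = c.length := by
      have h3 := (Walk.rotate_darts c u hu).perm.length_eq
      rwa [Walk.length_darts, Walk.length_darts] at h3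
    rw [Walk.length_reverse]
    omega
  have hA1e : ∀ f ∈ ((c.rotate u hu).takeUntil v hvc').edges, f ∈ c.edges := fun f hf =>
    (Walk.rotate_edges c u hu).mem_iff.mp (Walk.edges_takeUntil_subset _ _ hf)
  have hA2e : ∀ f ∈ ((c.rotate u hu).dropUntil v hvc').reverse.edges, f ∈ c.edges := by
    intro f hf
    rw [Walk.edges_reverse, List.mem_reverse] at hf
    exact (Walk.rotate_edges c u hu).mem_iff.mp (Walk.edges_dropUntil_subset _ _ hf)
  -- pick the two arcs, named so that p.length + B1.length is odd
  obtain ⟨B1, B2, hB1p, hB2p, hB1e, hB2e, hsum, hoddsum⟩ :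
      ∃ B1 B2 : G.Walk u v, B1.IsPath ∧ B2.IsPath ∧ (∀ f ∈ B1.edges, f ∈ c.edges) ∧
        (∀ f ∈ B2.edges, f ∈ c.edges) ∧ B1.length + B2.length = 2 * t + 1 ∧
        (p.length + B1.length) % 2 = 1 := by
    rcases Nat.even_or_odd (p.length + ((c.rotate u hu).takeUntil v hvc').length)
        with hpar | hpar
    · refine ⟨((c.rotate u hu).dropUntil v hvc').reverse, (c.rotate u hu).takeUntil v hvc',
        hA2p, harc1, hA2e, hA1e, by omega, ?_⟩
      rw [Nat.even_iff] at hpar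
      omega
    · exact ⟨(c.rotate u hu).takeUntil v hvc', ((c.rotate u hu).dropUntil v hvc').reverse,
        harc1, hA2p, hA1e, hA2e, hlen12, by rwa [Nat.odd_iff] at hpar⟩
  rcases Nat.lt_or_ge (p.length + B1.length) (2 * t + 1) with hcase | hcase
  · -- Case A : p together with B1 is a short odd closed walk
    have hWl : (p.append B1.reverse).length = p.length + B1.length := by
      rw [Walk.length_append, Walk.length_reverse]
    -- find an edge at u not on this closed walk
    have hnsub : ¬ (G.neighborFinset u ⊆ {p.getVert 1, B1.getVert 1}) := by
      intro hsub
      have hcard := Finset.card_le_card hsub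
      have h2 : ({p.getVert 1, B1.getVert 1} : Finset V).card ≤ 2 :=
        le_trans (Finset.card_insert_le _ _) (by simp)
      have hdu' : (G.neighborFinset u).card = G.degree u := rfl
      omega
    rw [Finset.not_subset] at hnsub
    obtain ⟨w, hw, hwn⟩ := hnsub
    rw [mem_neighborFinset] at hw
    have hfnot : s(u, w) ∉ (p.append B1.reverse).edges := by
      intro hmem
      rw [Walk.edges_append, List.mem_append] at hmem
      rcases hmem with hm | hm
      · exact hwn (by rw [start_edge_eq hpp hm]; simp)
      · rw [Walk.edges_reverse, List.mem_reverse] at hm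
        exact hwn (by rw [start_edge_eq hB1p hm]; simp)
    have hGne : G.deleteEdges {s(u,w)} ≠ G := by
      intro hdel
      rw [SimpleGraph.deleteEdges_eq_self] at hdel
      exact (Set.disjoint_left.mp hdel hw) rfl
    obtain ⟨φ⟩ := key _ (G.deleteEdges_le _) hGne
    have hWtrans : ∀ f ∈ (p.append B1.reverse).edges, f ∉ ({s(u,w)} : Set (Sym2 V)) := by
      intro f hf hfm
      rw [Set.mem_singleton_iff] at hfm
      exact hfnot (hfm ▸ hf)
    have hfinal := no_short_odd_closed_walk hn3
      (((p.append B1.reverse).toDeleteEdges _ hWtrans).map φ) ?_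
    · rw [Walk.length_map, Walk.length_transfer, hWl] at hfinal
      omega
    · rw [Walk.length_map, Walk.length_transfer, hWl]
      rw [Nat.odd_iff]
      exact hoddsum
  · -- Case B : reroute the string through the cycle
    have heE : e ∈ G.edgeSet := p.edges_subset_edgeSet hep
    have hGne : G.deleteEdges {e} ≠ G := by
      intro hdel
      rw [SimpleGraph.deleteEdges_eq_self] at hdel
      exact (Set.disjoint_left.mp hdel heE) rfl
    obtain ⟨φ⟩ := key _ (G.deleteEdges_le _) hGne
    have hB2trans : ∀ f ∈ B2.edges, f ∉ ({e} : Set (Sym2 V)) := by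
      intro f hf hfm
      rw [Set.mem_singleton_iff] at hfm
      exact hec (hfm ▸ hB2e f hf)
    have hW0l : ((B2.toDeleteEdges _ hB2trans).map φ).length = B2.length := by
      rw [Walk.length_map, Walk.length_transfer]
    obtain ⟨W, hWlen⟩ := exists_walk_length hn3 ((B2.toDeleteEdges _ hB2trans).map φ)
      (L := p.length) (by omega) (by omega)
    set ψ : V → Fin (2*t+1) := fun y =>
      if hy : y ∈ p.support then W.getVert (p.support.idxOf y) else φ y with hψdef
    have hψmem : ∀ y, y ∈ p.support → ψ y = W.getVert (p.support.idxOf y) := by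
      intro y hy
      rw [hψdef]
      exact dif_pos hy
    have hψnot : ∀ y, y ∉ p.support → ψ y = φ y := by
      intro y hy
      rw [hψdef]
      exact dif_neg hy
    have hψu : ψ u = φ u := by
      rw [hψmem u p.start_mem_support, indexOf_start, Walk.getVert_zero]
    have hψv : ψ v = φ v := by
      rw [hψmem v p.end_mem_support, indexOf_end hpp, ← hWlen, Walk.getVert_length]
    have hφadj : ∀ {a b : V}, G.Adj a b → s(a,b) ≠ e →
        (cycleGraph (2*t+1)).Adj (φ a) (φ b) := by
      intro a b hab hne
      exact φ.map_adj (by rw [SimpleGraph.deleteEdges_adj]; exact ⟨hab, by simpa using hne⟩)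
    have hint : ∀ {a b : V}, a ∈ p.support → a ≠ u → a ≠ v → G.Adj a b →
        s(a,b) ∈ p.edges := fun ha hau hav hab =>
      interior_adj_mem_edges hpp ha hau hav (hdeg _ ha hau hav) hab
    have hmain : ∀ a b : V, G.Adj a b → (cycleGraph (2*t+1)).Adj (ψ a) (ψ b) := by
      intro a b hab
      by_cases ha : a ∈ p.support <;> by_cases hb : b ∈ p.support
      · by_cases hedge : s(a,b) ∈ p.edges
        · rw [hψmem a ha, hψmem b hb]
          have hblt : p.support.idxOf b < p.support.length :=
            List.idxOf_lt_length_iff.mpr hb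
          have halt : p.support.idxOf a < p.support.length :=
            List.idxOf_lt_length_iff.mpr ha
          rw [Walk.length_support] at hblt halt
          rcases edge_indexOf hpp hedge with h' | h'
          · rw [h']
            exact W.adj_getVert_succ (by omega)
          · rw [h']
            exact (W.adj_getVert_succ (by omega)).symm
        · have hau : a = u ∨ a = v := by
            by_contra hcon
            push_neg at hcon
            exact hedge (hint ha hcon.1 hcon.2 hab)
          have hbu : b = u ∨ b = v := by
            by_contra hcon
            push_neg at hcon
            refine hedge ?_
            rw [Sym2.eq_swap]
            exact hint hb hcon.1 hcon.2 hab.symm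
          have hne : s(a,b) ≠ e := fun h => hedge (h ▸ hep)
          have hψa : ψ a = φ a := by rcases hau with rfl | rfl; exacts [hψu, hψv]
          have hψb : ψ b = φ b := by rcases hbu with rfl | rfl; exacts [hψu, hψv]
          rw [hψa, hψb]
          exact hφadj hab hne
      · have hane : a = u ∨ a = v := by
          by_contra hcon
          push_neg at hcon
          exact hb (p.snd_mem_support_of_mem_edges (hint ha hcon.1 hcon.2 hab))
        have hne : s(a,b) ≠ e := fun h => hb (p.snd_mem_support_of_mem_edges (h ▸ hep))
        have hψa : ψ a = φ a := by rcases hane with rfl | rfl; exacts [hψu, hψv]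
        rw [hψa, hψnot b hb]
        exact hφadj hab hne
      · have hbne : b = u ∨ b = v := by
          by_contra hcon
          push_neg at hcon
          exact ha (p.snd_mem_support_of_mem_edges (hint hb hcon.1 hcon.2 hab.symm))
        have hne : s(a,b) ≠ e := fun h => ha (p.fst_mem_support_of_mem_edges (h ▸ hep))
        have hψb : ψ b = φ b := by rcases hbne with rfl | rfl; exacts [hψu, hψv]
        rw [hψb, hψnot a ha]
        exact hφadj hab hne
      · have hne : s(a,b) ≠ e := fun h => ha (p.fst_mem_support_of_mem_edges (h ▸ hep))
        rw [hψnot a ha, hψnot b hb]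
        exact hφadj hab hne
    exact hcrit.1 ⟨⟨ψ, fun {a b} hab => hmain a b hab⟩⟩
end

section
/- In a C_7-critical graph, every string has at most 4 internal vertices. -/
open SimpleGraph
open Fin.NatCast
open Fin.CommRing

/- ### Auxiliary lemmas about walks in `C₇` -/

lemma c7_adj_add (a : Fin 7) : (cycleGraph 7).Adj a (a + 1) := by revert a; decide

lemma c7_adj_sub (a : Fin 7) : (cycleGraph 7).Adj a (a - 1) := by revert a; decide

lemma c7_walk_plus : ∀ (n : ℕ) (a : Fin 7),
    ∃ w : (cycleGraph 7).Walk a (a + (n : Fin 7)), w.length = n := by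
  intro n
  induction n with
  | zero => intro a; exact ⟨Walk.nil.copy rfl (by push_cast; ring), by simp⟩
  | succ n ih =>
    intro a
    obtain ⟨w, hw⟩ := ih (a + 1)
    exact ⟨Walk.cons (c7_adj_add a) (w.copy rfl (by push_cast; ring)), by simp [hw]⟩

lemma c7_walk_minus : ∀ (n : ℕ) (a : Fin 7),
    ∃ w : (cycleGraph 7).Walk a (a - (n : Fin 7)), w.length = n := by
  intro n
  induction n with
  | zero => intro a; exact ⟨Walk.nil.copy rfl (by push_cast; ring), by simp⟩
  | succ n ih =>
    intro a
    obtain ⟨w, hw⟩ := ih (a - 1)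
    exact ⟨Walk.cons (c7_adj_sub a) (w.copy rfl (by push_cast; ring)), by simp [hw]⟩

lemma c7_walk_six (a b : Fin 7) : ∃ w : (cycleGraph 7).Walk a b, w.length = 6 := by
  have key : ∀ a b : Fin 7, ∃ k : Fin 7,
      a + ((k.val : ℕ) : Fin 7) - (((6 - k.val : ℕ)) : Fin 7) = b := by decide
  obtain ⟨k, hk⟩ := key a b
  obtain ⟨w1, hw1⟩ := c7_walk_plus k.val a
  obtain ⟨w2, hw2⟩ := c7_walk_minus (6 - k.val) (a + (k.val : Fin 7))
  refine ⟨(w1.append w2).copy rfl hk, ?_⟩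
  have hk6 : k.val ≤ 6 := Nat.lt_succ_iff.mp k.isLt
  simp [hw1, hw2, Nat.add_sub_cancel' hk6]

lemma c7_walk_ge_six {n : ℕ} (hn : 6 ≤ n) (a b : Fin 7) :
    ∃ w : (cycleGraph 7).Walk a b, w.length = n := by
  induction n, hn using Nat.le_induction generalizing a b with
  | base => exact c7_walk_six a b
  | succ n hn ih =>
    obtain ⟨w, hw⟩ := ih (a + 1) b
    exact ⟨Walk.cons (c7_adj_add a) w, by simp [hw]⟩

/- ### Auxiliary lemmas about paths -/

lemma getVert_mem_support'_s13 {V : Type} {G : SimpleGraph V} {u v : V} (p : G.Walk u v) (i : ℕ) :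
    p.getVert i ∈ p.support := by
  induction p generalizing i with
  | nil => simp [Walk.getVert]
  | cons h q ih =>
    cases i with
    | zero => simp [Walk.getVert]
    | succ j => simp only [Walk.support_cons, List.mem_cons]; exact Or.inr (ih j)

lemma path_getVert_inj {V : Type} {G : SimpleGraph V} {u v : V} {p : G.Walk u v}
    (hp : p.IsPath) :
    ∀ i ≤ p.length, ∀ j ≤ p.length, p.getVert i = p.getVert j → i = j := by
  induction p with
  | nil => intro i hi j hj _; simp at hi hj; omega
  | cons h q ih =>
    intro i hi j hj hij
    have hq : q.IsPath := hp.of_cons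
    have hu := hp.support_nodup
    simp only [Walk.support_cons, List.nodup_cons] at hu
    replace hu := hu.1
    cases i with
    | zero =>
      cases j with
      | zero => rfl
      | succ j' =>
        exfalso
        simp only [Walk.getVert] at hij
        exact hu (hij ▸ getVert_mem_support'_s13 q j')
    | succ i' =>
      cases j with
      | zero =>
        exfalso
        simp only [Walk.getVert] at hij
        exact hu (hij ▸ getVert_mem_support'_s13 q i')
      | succ j' =>
        simp only [Walk.getVert] at hij
        simp only [Walk.length_cons, Nat.succ_le_succ_iff] at hi hj
        exact congrArg Nat.succ (ih hq i' hi j' hj hij)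

/-- In a `C₇`-critical graph, every string has at most 4 internal
vertices (equivalently, length at most 5). -/
theorem c7_string_short {V : Type} [Fintype V] (G : SimpleGraph V)
    [DecidableRel G.Adj] (hcrit : HCritical G (cycleGraph 7))
    {u v : V} (p : G.Walk u v) (hp : IsString G p) :
    p.length ≤ 5 := by
  classical
  by_contra hcon
  push_neg at hcon
  have hn : 6 ≤ p.length := hcon
  obtain ⟨hpath, -, -, hdeg2⟩ := hp
  have hinj := path_getVert_inj hpath
  -- internal vertices have degree 2
  have hdeg : ∀ i, 0 < i → i < p.length → G.degree (p.getVert i) = 2 := by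
    intro i hi0 hin
    refine hdeg2 _ (getVert_mem_support'_s13 p i) ?_ ?_
    · intro h
      have : i = 0 := hinj i hin.le 0 (by omega) (h.trans (p.getVert_zero).symm)
      omega
    · intro h
      have : i = p.length := hinj i hin.le p.length le_rfl (h.trans (p.getVert_length).symm)
      omega
  -- neighbors of internal vertices are the path neighbors
  have hnbr : ∀ j, j + 2 ≤ p.length → ∀ b, G.Adj (p.getVert (j+1)) b →
      b = p.getVert j ∨ b = p.getVert (j+2) := by
    intro j hj b hb
    have h1 : G.Adj (p.getVert (j+1)) (p.getVert j) :=
      (p.adj_getVert_succ (by omega)).symm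
    have h2 : G.Adj (p.getVert (j+1)) (p.getVert (j+2)) :=
      p.adj_getVert_succ (by omega)
    have hne : p.getVert j ≠ p.getVert (j+2) := by
      intro h; have := hinj j (by omega) (j+2) (by omega) h; omega
    have hsub : ({p.getVert j, p.getVert (j+2)} : Finset V)
        ⊆ G.neighborFinset (p.getVert (j+1)) := by
      intro x hx
      simp only [Finset.mem_insert, Finset.mem_singleton] at hx
      rcases hx with rfl | rfl
      · exact (mem_neighborFinset _ _ _).mpr h1
      · exact (mem_neighborFinset _ _ _).mpr h2
    have hcard : ({p.getVert j, p.getVert (j+2)} : Finset V).card = 2 := by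
      rw [Finset.card_insert_of_notMem (by simpa using hne), Finset.card_singleton]
    have heq : ({p.getVert j, p.getVert (j+2)} : Finset V)
        = G.neighborFinset (p.getVert (j+1)) := by
      refine Finset.eq_of_subset_of_card_le hsub ?_
      rw [hcard]
      exact le_of_eq (hdeg (j+1) (by omega) (by omega))
    have hmem := (mem_neighborFinset _ _ _).mpr hb
    rw [← heq] at hmem
    simpa using hmem
  -- delete the first edge of the path
  let G' : G.Subgraph :=
    { verts := Set.univ
      Adj := fun a b => G.Adj a b ∧
        ¬((a = p.getVert 0 ∧ b = p.getVert 1) ∨ (a = p.getVert 1 ∧ b = p.getVert 0))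
      adj_sub := fun h => h.1
      edge_vert := fun _ => Set.mem_univ _
      symm := ⟨by intro a b h; exact ⟨h.1.symm, by tauto⟩⟩ }
  have hG' : G' ≠ ⊤ := by
    intro h
    have h01 : G.Adj (p.getVert 0) (p.getVert 1) := p.adj_getVert_succ (by omega)
    have hadj : G'.Adj (p.getVert 0) (p.getVert 1) := by
      rw [h]; exact Subgraph.top_adj.mpr h01
    exact hadj.2 (Or.inl ⟨rfl, rfl⟩)
  obtain ⟨φ0⟩ := hcrit.2 G' hG'
  let φ : V → Fin 7 := fun w => φ0 ⟨w, Set.mem_univ w⟩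
  have hφ : ∀ a b : V, G'.Adj a b → (cycleGraph 7).Adj (φ a) (φ b) := by
    intro a b h
    exact φ0.map_adj h
  -- a walk of the right length in C₇
  obtain ⟨W, hW⟩ := c7_walk_ge_six hn (φ u) (φ v)
  -- the rerouted map
  let Int : V → Prop := fun w => ∃ i, 0 < i ∧ i < p.length ∧ p.getVert i = w
  let f : V → Fin 7 := fun w => if hw : Int w then W.getVert (Classical.choose hw) else φ w
  have hf_out : ∀ w, ¬ Int w → f w = φ w := fun w hw => dif_neg hw
  have hf_int : ∀ i, 0 < i → i < p.length → f (p.getVert i) = W.getVert i := by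
    intro i hi0 hin
    have hw : Int (p.getVert i) := ⟨i, hi0, hin, rfl⟩
    have h1 : f (p.getVert i) = W.getVert (Classical.choose hw) := dif_pos hw
    rw [h1]
    obtain ⟨hj0, hjn, hj⟩ := Classical.choose_spec hw
    congr 1
    exact hinj _ hjn.le i hin.le hj
  have hf0 : f u = W.getVert 0 := by
    have hni : ¬ Int u := by
      rintro ⟨i, hi0, hin, hi⟩
      have : i = 0 := hinj i hin.le 0 (by omega) (hi.trans (p.getVert_zero).symm)
      omega
    rw [hf_out u hni, W.getVert_zero]
  have hfn : f v = W.getVert p.length := by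
    have hni : ¬ Int v := by
      rintro ⟨i, hi0, hin, hi⟩
      have : i = p.length := hinj i hin.le p.length le_rfl (hi.trans (p.getVert_length).symm)
      omega
    rw [hf_out v hni, show p.length = W.length from hW.symm, W.getVert_length]
  have hfi : ∀ i ≤ p.length, f (p.getVert i) = W.getVert i := by
    intro i hi
    rcases Nat.eq_zero_or_pos i with rfl | hi0
    · rw [p.getVert_zero]; exact hf0
    rcases eq_or_lt_of_le hi with rfl | hin
    · rw [p.getVert_length]; exact hfn
    · exact hf_int i hi0 hin
  -- f is a homomorphism
  have key : ∀ a b : V, G.Adj a b → Int a → (cycleGraph 7).Adj (f a) (f b) := by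
    rintro a b hab ⟨i, hi0, hin, rfl⟩
    obtain ⟨j, rfl⟩ : ∃ j, i = j + 1 := ⟨i - 1, by omega⟩
    rcases hnbr j (by omega) b hab with rfl | rfl
    · rw [hf_int (j+1) (by omega) hin, hfi j (by omega)]
      exact (W.adj_getVert_succ (by omega)).symm
    · rw [hf_int (j+1) (by omega) hin, hfi (j+2) (by omega)]
      exact W.adj_getVert_succ (by omega)
  have hhom : ∀ a b : V, G.Adj a b → (cycleGraph 7).Adj (f a) (f b) := by
    intro a b hab
    by_cases ha : Int a
    · exact key a b hab ha
    by_cases hb : Int b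
    · exact (key b a hab.symm hb).symm
    · rw [hf_out a ha, hf_out b hb]
      refine hφ a b ⟨hab, ?_⟩
      rintro (⟨h1, h2⟩ | ⟨h1, h2⟩)
      · exact hb ⟨1, by omega, by omega, h2.symm⟩
      · exact ha ⟨1, by omega, by omega, h1.symm⟩
  exact hcrit.1 ⟨⟨f, fun {a b} h => hhom a b h⟩⟩
end

section
/- In a C_7-critical graph, every vertex v of degree 3 has weight at most 8, i.e., the total number of internal vertices of the three strings incident with v is at most 8. -/
open SimpleGraph

open Fin.NatCast Fin.CommRing

/-! ### Arithmetic of reachability in `cycleGraph 7` -/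

def canReach (ℓ : ℕ) (x y : Fin 7) : Prop :=
  ∃ a ∈ Finset.range (ℓ+1), y = x + (a : Fin 7) - ((ℓ - a : ℕ) : Fin 7)

instance (ℓ : ℕ) (x y : Fin 7) : Decidable (canReach ℓ x y) := by
  unfold canReach; infer_instance

lemma exists_walk_of_canReach {ℓ : ℕ} {x y : Fin 7} (h : canReach ℓ x y) :
    ∃ q : (cycleGraph 7).Walk x y, q.length = ℓ := by
  induction ℓ generalizing x with
  | zero =>
    obtain ⟨a, ha, hy⟩ := h
    simp only [Finset.mem_range] at ha
    have ha0 : a = 0 := by omega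
    subst ha0
    simp only [Nat.cast_zero, Nat.zero_sub, Nat.cast_zero, add_zero, sub_zero] at hy
    subst hy
    exact ⟨SimpleGraph.Walk.nil, rfl⟩
  | succ ℓ ih =>
    obtain ⟨a, ha, hy⟩ := h
    simp only [Finset.mem_range] at ha
    match a, ha with
    | 0, _ =>
      have hadj : (cycleGraph 7).Adj x (x - 1) := by
        rw [cycleGraph_adj]; left; ring_nf
      have h' : canReach ℓ (x - 1) y := by
        refine ⟨0, by simp, ?_⟩
        simp only [Nat.cast_zero, add_zero, Nat.sub_zero] at hy ⊢
        rw [hy]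
        push_cast
        ring
      obtain ⟨q, hq⟩ := ih h'
      exact ⟨SimpleGraph.Walk.cons hadj q, by simp [hq]⟩
    | a' + 1, ha =>
      have hadj : (cycleGraph 7).Adj x (x + 1) := by
        rw [cycleGraph_adj]; right; ring_nf
      have h' : canReach ℓ (x + 1) y := by
        refine ⟨a', by simp only [Finset.mem_range]; omega, ?_⟩
        rw [hy]
        have h1 : (ℓ + 1 - (a' + 1)) = ℓ - a' := by omega
        rw [h1]
        push_cast
        ring
      obtain ⟨q, hq⟩ := ih h'
      exact ⟨SimpleGraph.Walk.cons hadj q, by simp [hq]⟩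

lemma canReach_six : ∀ x y : Fin 7, canReach 6 x y := by decide

lemma canReach_seven : ∀ x y : Fin 7, canReach 7 x y := by decide

lemma canReach_add_two {ℓ : ℕ} {x y : Fin 7} (h : canReach ℓ x y) : canReach (ℓ+2) x y := by
  obtain ⟨a, ha, hy⟩ := h
  simp only [Finset.mem_range] at ha
  refine ⟨a + 1, by simp only [Finset.mem_range]; omega, ?_⟩
  rw [hy]
  have h1 : (ℓ + 2 - (a + 1)) = (ℓ - a) + 1 := by omega
  rw [h1]
  push_cast
  ring

lemma canReach_of_ge_six {ℓ : ℕ} (h : 6 ≤ ℓ) (x y : Fin 7) : canReach ℓ x y := by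
  obtain ⟨m, rfl⟩ := Nat.exists_eq_add_of_le h
  induction m using Nat.twoStepInduction with
  | zero => exact canReach_six x y
  | one => exact canReach_seven x y
  | more m ih ih2 =>
    have h2 : 6 + (m + 2) = (6 + m) + 2 := by omega
    rw [h2]
    exact canReach_add_two (ih (by omega))

set_option maxHeartbeats 4000000 in
lemma canReach_inter : ∀ (a b c : Fin 5) (ya yb yc : Fin 7),
    12 ≤ (a : ℕ) + 1 + ((b : ℕ) + 1) + ((c : ℕ) + 1) →
    ∃ z : Fin 7, canReach ((a : ℕ)+1) z ya ∧ canReach ((b : ℕ)+1) z yb ∧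
      canReach ((c : ℕ)+1) z yc := by
  decide

/-! ### Walk index lemmas -/

section WalkIdx
variable {V : Type} [DecidableEq V] {G : SimpleGraph V}

lemma walk_support_getElem? {u v : V} (p : G.Walk u v) :
    ∀ (n : ℕ), n ≤ p.length → p.support[n]? = some (p.getVert n) := by
  induction p with
  | nil =>
    intro n hn
    have : n = 0 := by simpa using hn
    subst this
    simp [SimpleGraph.Walk.support_nil, SimpleGraph.Walk.getVert_zero]
  | cons h q ih =>
    intro n hn
    cases n with
    | zero => simp [SimpleGraph.Walk.support_cons, SimpleGraph.Walk.getVert_zero]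
    | succ m =>
      simp only [SimpleGraph.Walk.support_cons, SimpleGraph.Walk.getVert_cons_succ]
      rw [List.getElem?_cons_succ]
      exact ih m (by simpa using hn)

lemma walk_getVert_indexOf {u v : V} (p : G.Walk u v) {z : V} (hz : z ∈ p.support) :
    List.idxOf z p.support ≤ p.length ∧ p.getVert (List.idxOf z p.support) = z := by
  have hlt : List.idxOf z p.support < p.support.length := List.idxOf_lt_length_iff.mpr hz
  have hlen : p.support.length = p.length + 1 := SimpleGraph.Walk.length_support p
  constructor
  · omega
  · have h1 := walk_support_getElem? p (List.idxOf z p.support) (by omega)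
    have h2 : p.support[List.idxOf z p.support]? = some z := by
      rw [List.getElem?_eq_getElem hlt, List.getElem_idxOf hlt]
    rw [h1] at h2
    exact Option.some_injective _ h2

lemma walk_getVert_inj {u v : V} {p : G.Walk u v} (hp : p.support.Nodup)
    {m n : ℕ} (hm : m ≤ p.length) (hn : n ≤ p.length) (h : p.getVert m = p.getVert n) :
    m = n := by
  have hlen : p.support.length = p.length + 1 := SimpleGraph.Walk.length_support p
  have h1 := walk_support_getElem? p m hm
  have h2 := walk_support_getElem? p n hn
  apply (List.getElem?_inj (by omega) hp).mp
  rw [h1, h2, h]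

lemma walk_indexOf_getVert {u v : V} {p : G.Walk u v} (hp : p.support.Nodup)
    {n : ℕ} (hn : n ≤ p.length) : List.idxOf (p.getVert n) p.support = n := by
  have hmem : p.getVert n ∈ p.support := by
    rw [SimpleGraph.Walk.mem_support_iff_exists_getVert]
    exact ⟨n, rfl, hn⟩
  obtain ⟨h1, h2⟩ := walk_getVert_indexOf p hmem
  exact walk_getVert_inj hp h1 hn h2

end WalkIdx

/-! ### Degree-based neighbor classification -/

section Deg
variable {V : Type} [Fintype V] {G : SimpleGraph V} [DecidableRel G.Adj]

lemma deg2_adj_cases {z a b c : V} (hdeg : G.degree z = 2)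
    (ha : G.Adj z a) (hb : G.Adj z b) (hab : a ≠ b) (hc : G.Adj z c) :
    c = a ∨ c = b := by
  classical
  have hsub : ({a, b} : Finset V) ⊆ G.neighborFinset z := by
    intro t ht
    simp only [Finset.mem_insert, Finset.mem_singleton] at ht
    rcases ht with rfl | rfl
    · exact (SimpleGraph.mem_neighborFinset _ _ _).mpr ha
    · exact (SimpleGraph.mem_neighborFinset _ _ _).mpr hb
  have hcard : ({a, b} : Finset V).card = 2 := by
    rw [Finset.card_insert_of_notMem (by simpa using hab), Finset.card_singleton]
  have heq : G.neighborFinset z = {a, b} := by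
    apply (Finset.eq_of_subset_of_card_le hsub _).symm
    rw [hcard, ← SimpleGraph.card_neighborFinset_eq_degree] at *
    omega
  have := (SimpleGraph.mem_neighborFinset _ _ _).mpr hc
  rw [heq] at this
  simpa using this

lemma deg3_adj_cases {z a b c d : V} (hdeg : G.degree z = 3)
    (ha : G.Adj z a) (hb : G.Adj z b) (hc : G.Adj z c)
    (hab : a ≠ b) (hac : a ≠ c) (hbc : b ≠ c) (hd : G.Adj z d) :
    d = a ∨ d = b ∨ d = c := by
  classical
  have hsub : ({a, b, c} : Finset V) ⊆ G.neighborFinset z := by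
    intro t ht
    simp only [Finset.mem_insert, Finset.mem_singleton] at ht
    rcases ht with rfl | rfl | rfl
    · exact (SimpleGraph.mem_neighborFinset _ _ _).mpr ha
    · exact (SimpleGraph.mem_neighborFinset _ _ _).mpr hb
    · exact (SimpleGraph.mem_neighborFinset _ _ _).mpr hc
  have hcard : ({a, b, c} : Finset V).card = 3 := by
    rw [Finset.card_insert_of_notMem (by simp [hab, hac]),
        Finset.card_insert_of_notMem (by simpa using hbc), Finset.card_singleton]
  have heq : G.neighborFinset z = {a, b, c} := by
    apply (Finset.eq_of_subset_of_card_le hsub _).symm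
    rw [hcard, ← SimpleGraph.card_neighborFinset_eq_degree] at *
    omega
  have := (SimpleGraph.mem_neighborFinset _ _ _).mpr hd
  rw [heq] at this
  simpa using this

end Deg

/-! ### Chain determination -/

section Chain
variable {V : Type} [Fintype V] [DecidableEq V] {G : SimpleGraph V} [DecidableRel G.Adj]

lemma chain_determined_aux :
    ∀ (n : ℕ) {x b c : V} (p : G.Walk x b) (q : G.Walk x c) (u : V),
    p.length ≤ n → p.IsPath → q.IsPath →
    (∀ y ∈ p.support, y ≠ b → G.degree y = 2) →
    (∀ y ∈ q.support, y ≠ c → G.degree y = 2) →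
    3 ≤ G.degree b → 3 ≤ G.degree c →
    G.Adj u x → u ∉ p.support → u ∉ q.support →
    p.support = q.support := by
  intro n
  induction n with
  | zero =>
    intro x b c p q u hlen hp hq hdp hdq hb hc hux hup huq
    cases p with
    | nil =>
      cases q with
      | nil => rfl
      | cons h' q' =>
        exfalso
        have hxc : x ≠ c := by
          intro he
          subst he
          exact ((SimpleGraph.Walk.cons_isPath_iff _ _).mp hq).2 (SimpleGraph.Walk.end_mem_support q')
        have := hdq x (SimpleGraph.Walk.start_mem_support _) hxc
        omega
    | cons h' p' => simp at hlen
  | succ n ih =>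
    intro x b c p q u hlen hp hq hdp hdq hb hc hux hup huq
    cases p with
    | nil =>
      cases q with
      | nil => rfl
      | cons h' q' =>
        exfalso
        have hxc : x ≠ c := by
          intro he
          subst he
          exact ((SimpleGraph.Walk.cons_isPath_iff _ _).mp hq).2 (SimpleGraph.Walk.end_mem_support q')
        have := hdq x (SimpleGraph.Walk.start_mem_support _) hxc
        omega
    | @cons _ y _ h p' =>
      cases q with
      | nil =>
        exfalso
        have hxb : x ≠ b := by
          intro he
          subst he
          exact ((SimpleGraph.Walk.cons_isPath_iff _ _).mp hp).2 (SimpleGraph.Walk.end_mem_support p')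
        have := hdp x (SimpleGraph.Walk.start_mem_support _) hxb
        omega
      | @cons _ y' _ h' q' =>
        have hxb : x ≠ b := by
          intro he
          subst he
          exact ((SimpleGraph.Walk.cons_isPath_iff _ _).mp hp).2 (SimpleGraph.Walk.end_mem_support p')
        have hdx : G.degree x = 2 := hdp x (SimpleGraph.Walk.start_mem_support _) hxb
        have hyu : y ≠ u := by
          intro he; subst he
          exact hup (by simp [SimpleGraph.Walk.support_cons, SimpleGraph.Walk.start_mem_support])
        have hy'u : y' ≠ u := by
          intro he; subst he
          exact huq (by simp [SimpleGraph.Walk.support_cons, SimpleGraph.Walk.start_mem_support])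
        rcases deg2_adj_cases hdx hux.symm h (Ne.symm hyu) h' with h1 | h1
        · exact absurd h1 hy'u
        subst h1
        have hps := ih p' q' x (by simp at hlen; omega) hp.of_cons hq.of_cons
          (fun z hz hzb => hdp z (by simp [SimpleGraph.Walk.support_cons, hz]) hzb)
          (fun z hz hzc => hdq z (by simp [SimpleGraph.Walk.support_cons, hz]) hzc)
          hb hc h
          ((SimpleGraph.Walk.cons_isPath_iff _ _).mp hp).2
          ((SimpleGraph.Walk.cons_isPath_iff _ _).mp hq).2
        simp [SimpleGraph.Walk.support_cons, hps]

lemma chain_determined {x b c : V} (p : G.Walk x b) (q : G.Walk x c) (u : V)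
    (hp : p.IsPath) (hq : q.IsPath)
    (hdp : ∀ y ∈ p.support, y ≠ b → G.degree y = 2)
    (hdq : ∀ y ∈ q.support, y ≠ c → G.degree y = 2)
    (hb : 3 ≤ G.degree b) (hc : 3 ≤ G.degree c)
    (hux : G.Adj u x) (hup : u ∉ p.support) (huq : u ∉ q.support) :
    p.support = q.support :=
  chain_determined_aux p.length p q u le_rfl hp hq hdp hdq hb hc hux hup huq

end Chain

/-! ### Deletion lemma -/

lemma hom_of_delete {V W : Type} {G : SimpleGraph V} {H : SimpleGraph W}
    (hcrit : HCritical G H) {D : Set V} (hD : D.Nonempty) :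
    Nonempty ((((⊤ : G.Subgraph).deleteVerts D)).coe →g H) := by
  apply hcrit.2
  intro h
  obtain ⟨d, hd⟩ := hD
  have hv : ((⊤ : G.Subgraph).deleteVerts D).verts = (⊤ : G.Subgraph).verts := by rw [h]
  rw [SimpleGraph.Subgraph.deleteVerts_verts, SimpleGraph.Subgraph.verts_top] at hv
  have : d ∈ Set.univ \ D := hv.symm ▸ Set.mem_univ d
  exact this.2 hd

/-! ### No long strings -/

lemma string_internal_le_four {V : Type} [Fintype V] {G : SimpleGraph V} [DecidableRel G.Adj]
    (hcrit : HCritical G (cycleGraph 7)) {x y : V} (p : G.Walk x y)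
    (hstr : IsString G p) {k : ℕ} (hlen : p.length = k + 1) : k ≤ 4 := by
  classical
  by_contra hk5
  push_neg at hk5
  obtain ⟨hp, hdx, hdy, hint⟩ := hstr
  have hnodup : p.support.Nodup := hp.support_nodup
  have hlen6 : 6 ≤ p.length := by omega
  have hxy : ∀ {m n : ℕ}, m ≤ p.length → n ≤ p.length → p.getVert m = p.getVert n → m = n :=
    fun hm hn h => walk_getVert_inj hnodup hm hn h
  have hne0 : ∀ {n : ℕ}, n ≤ p.length → n ≠ 0 → p.getVert n ≠ x := by
    intro n hn hn0 h
    exact hn0 (hxy hn (Nat.zero_le _) (by rw [h, p.getVert_zero]))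
  have hneL : ∀ {n : ℕ}, n ≤ p.length → n ≠ p.length → p.getVert n ≠ y := by
    intro n hn hnL h
    exact hnL (hxy hn le_rfl (by rw [h, p.getVert_length]))
  set D : Set V := {z | z ∈ p.support ∧ z ≠ x ∧ z ≠ y} with hDdef
  have hmemD : ∀ {n : ℕ}, n ≤ p.length → n ≠ 0 → n ≠ p.length → p.getVert n ∈ D := by
    intro n hn h0 hL
    refine ⟨?_, hne0 hn h0, hneL hn hL⟩
    rw [SimpleGraph.Walk.mem_support_iff_exists_getVert]
    exact ⟨n, rfl, hn⟩
  have hDne : D.Nonempty := ⟨p.getVert 1, hmemD (by omega) (by omega) (by omega)⟩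
  obtain ⟨φ⟩ := hom_of_delete hcrit hDne
  have hxV : x ∈ ((⊤ : G.Subgraph).deleteVerts D).verts := by
    rw [SimpleGraph.Subgraph.deleteVerts_verts, SimpleGraph.Subgraph.verts_top]
    exact ⟨Set.mem_univ x, fun hx => hx.2.1 rfl⟩
  have hyV : y ∈ ((⊤ : G.Subgraph).deleteVerts D).verts := by
    rw [SimpleGraph.Subgraph.deleteVerts_verts, SimpleGraph.Subgraph.verts_top]
    exact ⟨Set.mem_univ y, fun hy => hy.2.2 rfl⟩
  obtain ⟨q, hq⟩ := exists_walk_of_canReach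
    (canReach_of_ge_six hlen6 (φ ⟨x, hxV⟩) (φ ⟨y, hyV⟩))
  obtain ⟨ψ, hin, hout⟩ : ∃ ψ : V → Fin 7,
      (∀ z, z ∈ D → ψ z = q.getVert (List.idxOf z p.support)) ∧
      (∀ z (hz : z ∈ ((⊤ : G.Subgraph).deleteVerts D).verts), z ∉ D → ψ z = φ ⟨z, hz⟩) := by
    refine ⟨fun z => if h : z ∈ D then q.getVert (List.idxOf z p.support)
      else φ ⟨z, by
        rw [SimpleGraph.Subgraph.deleteVerts_verts, SimpleGraph.Subgraph.verts_top]
        exact ⟨Set.mem_univ z, h⟩⟩, fun z h => dif_pos h, fun z hz h => by dsimp only; rw [dif_neg h]⟩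
  have hxD : x ∉ D := fun hx => hx.2.1 rfl
  have hyD : y ∉ D := fun hy => hy.2.2 rfl
  have key : ∀ n, n ≤ p.length → ψ (p.getVert n) = q.getVert n := by
    intro n hn
    rcases Nat.eq_zero_or_pos n with rfl | hpos
    · rw [p.getVert_zero, hout x hxV hxD]
      exact q.getVert_zero.symm
    rcases eq_or_ne n p.length with rfl | hnL
    · rw [p.getVert_length, hout y hyV hyD]
      have h2 := q.getVert_length
      rw [hq] at h2
      rw [h2]
    · have hzD : p.getVert n ∈ D := hmemD hn (by omega) hnL
      rw [hin _ hzD, walk_indexOf_getVert hnodup hn]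
  have main : ∀ a b, G.Adj a b → a ∈ D → (cycleGraph 7).Adj (ψ a) (ψ b) := by
    intro a b hab haD
    obtain ⟨htle, hta⟩ := walk_getVert_indexOf p haD.1
    set t := List.idxOf a p.support with htdef
    have ht0 : t ≠ 0 := fun h => haD.2.1 (by rw [← hta, h, p.getVert_zero])
    have htL : t ≠ p.length := fun h => haD.2.2 (by rw [← hta, h, p.getVert_length])
    have hdega : G.degree a = 2 := hint a haD.1 haD.2.1 haD.2.2
    have hprev : G.Adj a (p.getVert (t-1)) := by
      have h2 := p.adj_getVert_succ (i := t-1) (by omega)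
      rw [(by omega : t - 1 + 1 = t), hta] at h2
      exact h2.symm
    have hnext : G.Adj a (p.getVert (t+1)) := by
      have h2 := p.adj_getVert_succ (i := t) (by omega)
      rw [hta] at h2
      exact h2
    have hpn : p.getVert (t-1) ≠ p.getVert (t+1) := by
      intro h
      have := hxy (by omega) (by omega) h
      omega
    rcases deg2_adj_cases hdega hprev hnext hpn hab with h | h
    · rw [← hta, key t htle, h, key (t-1) (by omega)]
      have h2 := q.adj_getVert_succ (i := t-1) (by rw [hq]; omega)
      rw [(by omega : t - 1 + 1 = t)] at h2
      exact h2.symm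
    · rw [← hta, key t htle, h, key (t+1) (by omega)]
      exact q.adj_getVert_succ (by rw [hq]; omega)
  apply hcrit.1
  refine ⟨⟨ψ, ?_⟩⟩
  intro a b hab
  by_cases haD : a ∈ D
  · exact main a b hab haD
  by_cases hbD : b ∈ D
  · exact (main b a hab.symm hbD).symm
  · have haV : a ∈ ((⊤ : G.Subgraph).deleteVerts D).verts := by
      rw [SimpleGraph.Subgraph.deleteVerts_verts, SimpleGraph.Subgraph.verts_top]
      exact ⟨Set.mem_univ a, haD⟩
    have hbV : b ∈ ((⊤ : G.Subgraph).deleteVerts D).verts := by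
      rw [SimpleGraph.Subgraph.deleteVerts_verts, SimpleGraph.Subgraph.verts_top]
      exact ⟨Set.mem_univ b, hbD⟩
    rw [hout a haV haD, hout b hbV hbD]
    exact φ.map_adj (by
      rw [SimpleGraph.Subgraph.coe_adj]
      exact (SimpleGraph.Subgraph.deleteVerts_adj).mpr
        ⟨Set.mem_univ a, haD, Set.mem_univ b, hbD, (SimpleGraph.Subgraph.top_adj).mpr hab⟩)

/-! ### Splitting a path at an internal vertex -/

lemma split_facts {V : Type} {G : SimpleGraph V} [DecidableEq V] {x y z : V}
    (p : G.Walk x y) (hp : p.IsPath)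
    (hz : z ∈ p.support) (hzx : z ≠ x) (hzy : z ≠ y) :
    ((p.takeUntil z hz).reverse).IsPath ∧ (p.dropUntil z hz).IsPath ∧
    ((p.takeUntil z hz).reverse).length ≠ 0 ∧ (p.dropUntil z hz).length ≠ 0 ∧
    x ∉ (p.dropUntil z hz).support ∧ y ∉ ((p.takeUntil z hz).reverse).support ∧
    (∀ t, t ∈ ((p.takeUntil z hz).reverse).support → t ∈ (p.dropUntil z hz).support → t = z) ∧
    p.support = (p.takeUntil z hz).support ++ (p.dropUntil z hz).support.tail := by
  set ta := p.takeUntil z hz with hta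
  set d := p.dropUntil z hz with hd
  have hspec : ta.append d = p := p.take_spec hz
  have hsupp : p.support = ta.support ++ d.support.tail := by
    rw [← hspec, SimpleGraph.Walk.support_append]
  have hnd : (ta.support ++ d.support.tail).Nodup := by
    rw [← hsupp]; exact hp.support_nodup
  have hdisj : List.Disjoint ta.support d.support.tail := List.disjoint_of_nodup_append hnd
  have htp : ta.IsPath := hp.takeUntil hz
  have hdp : d.IsPath := hp.dropUntil hz
  have htr : ta.reverse.IsPath := htp.reverse
  have hdeq : d.support = z :: d.support.tail := d.support_eq_cons
  have htlen : ta.reverse.length ≠ 0 := by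
    intro h
    rw [SimpleGraph.Walk.length_reverse] at h
    have : ta.Nil := SimpleGraph.Walk.nil_iff_length_eq.mpr h
    exact hzx (SimpleGraph.Walk.Nil.eq this).symm
  have hdlen : d.length ≠ 0 := by
    intro h
    have : d.Nil := SimpleGraph.Walk.nil_iff_length_eq.mpr h
    exact hzy (SimpleGraph.Walk.Nil.eq this)
  refine ⟨htr, hdp, htlen, hdlen, ?_, ?_, ?_, hsupp⟩
  · intro hxd
    rw [hdeq] at hxd
    rcases List.mem_cons.mp hxd with h | h
    · exact hzx h.symm
    · exact hdisj (SimpleGraph.Walk.start_mem_support ta) h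
  · intro hyr
    rw [SimpleGraph.Walk.support_reverse, List.mem_reverse] at hyr
    have hyd : y ∈ d.support.tail := by
      have := SimpleGraph.Walk.end_mem_support d
      rw [hdeq] at this
      rcases List.mem_cons.mp this with h | h
      · exact absurd h.symm hzy
      · exact h
    exact hdisj hyr hyd
  · intro t htr' htd
    rw [SimpleGraph.Walk.support_reverse, List.mem_reverse] at htr'
    rw [hdeq] at htd
    rcases List.mem_cons.mp htd with h | h
    · exact h
    · exact absurd h (fun hh => hdisj htr' hh)

/-! ### Main theorem -/

/-- In a `C₇`-critical graph, every vertex `v` of degree 3 has weight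
at most 8: the three distinct strings incident with `v`, having `k 0, k 1, k 2`
internal vertices, satisfy `k 0 + k 1 + k 2 ≤ 8`. -/
theorem c7_deg3_weight_le_eight {V : Type} [Fintype V] (G : SimpleGraph V)
    [DecidableRel G.Adj] (hcrit : HCritical G (cycleGraph 7))
    (v : V) (hdeg : G.degree v = 3)
    (w : Fin 3 → V) (p : ∀ i : Fin 3, G.Walk v (w i))
    (hstr : ∀ i, IsString G (p i))
    (hdist : ∀ i j, i ≠ j → (p i).support ≠ (p j).support)
    (k : Fin 3 → ℕ) (hk : ∀ i, (p i).length = k i + 1) :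
    k 0 + k 1 + k 2 ≤ 8 := by
  classical
  by_contra hsum
  push_neg at hsum
  have hk4 : ∀ i, k i ≤ 4 := fun i => string_internal_le_four hcrit (p i) (hstr i) (hk i)
  have hpI : ∀ i, (p i).IsPath := fun i => (hstr i).1
  have hnd : ∀ i, (p i).support.Nodup := fun i => (hpI i).support_nodup
  have hdw : ∀ i, 3 ≤ G.degree (w i) := fun i => (hstr i).2.2.1
  have hintI : ∀ i, ∀ z ∈ (p i).support, z ≠ v → z ≠ w i → G.degree z = 2 :=
    fun i => (hstr i).2.2.2
  have hxyI : ∀ (i : Fin 3) {m n : ℕ}, m ≤ (p i).length → n ≤ (p i).length →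
      (p i).getVert m = (p i).getVert n → m = n := by
    intro i m n hm hn h
    exact walk_getVert_inj (hnd i) hm hn h
  have hnnil : ∀ i, ¬ (p i).Nil := by
    intro i
    rw [SimpleGraph.Walk.nil_iff_length_eq, hk i]
    omega
  have hvw : ∀ i, v ≠ w i := by
    intro i h
    have h0 : (p i).getVert 0 = (p i).getVert ((p i).length) := by
      rw [(p i).getVert_zero, (p i).getVert_length]; exact h
    have := hxyI i (Nat.zero_le _) le_rfl h0
    rw [hk i] at this
    omega
  set I : Fin 3 → Set V := fun i => {z | z ∈ (p i).support ∧ z ≠ v ∧ z ≠ w i} with hIdef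
  have hmemI : ∀ (i : Fin 3) {n : ℕ}, n ≤ (p i).length → n ≠ 0 → n ≠ (p i).length →
      (p i).getVert n ∈ I i := by
    intro i n hn h0 hL
    refine ⟨?_, ?_, ?_⟩
    · rw [SimpleGraph.Walk.mem_support_iff_exists_getVert]; exact ⟨n, rfl, hn⟩
    · intro h
      apply h0
      apply hxyI i hn (Nat.zero_le _)
      rw [h, (p i).getVert_zero]
    · intro h
      apply hL
      apply hxyI i hn le_rfl
      rw [h, (p i).getVert_length]
  have hIdeg : ∀ (l : Fin 3) z, z ∈ I l → G.degree z = 2 := by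
    intro l z hz
    obtain ⟨h1, h2, h3⟩ := hz
    exact hintI l z h1 h2 h3
  have hfadj : ∀ i, G.Adj v ((p i).getVert 1) :=
    fun i => SimpleGraph.Walk.adj_snd (hnnil i)
  have hfne : ∀ i j, i ≠ j → (p i).getVert 1 ≠ (p j).getVert 1 := by
    intro i j hij he
    apply hdist i j hij
    have hti := (hpI i).tail
    have htj := (hpI j).tail
    have hvnotin : ∀ l : Fin 3, v ∉ (p l).tail.support := by
      intro l hvl
      rw [SimpleGraph.Walk.support_tail_of_not_nil _ (hnnil l)] at hvl
      have h2 := hnd l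
      rw [(p l).support_eq_cons] at h2
      exact (List.nodup_cons.mp h2).1 hvl
    have hsub : ∀ l : Fin 3, ∀ t, t ∈ (p l).tail.support → t ∈ (p l).support := by
      intro l t ht
      rw [SimpleGraph.Walk.support_tail_of_not_nil _ (hnnil l)] at ht
      exact List.mem_of_mem_tail ht
    have hdt : ∀ l : Fin 3, ∀ t ∈ (p l).tail.support, t ≠ w l → G.degree t = 2 := by
      intro l t ht hl
      exact hintI l t (hsub l t ht) (fun h => hvnotin l (h ▸ ht)) hl
    have heq := chain_determined ((p i).tail) (((p j).tail).copy he.symm rfl) v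
      hti ((SimpleGraph.Walk.isPath_copy _ _ _).mpr htj)
      (hdt i)
      (by
        intro t ht hl
        rw [SimpleGraph.Walk.support_copy] at ht
        exact hdt j t ht hl)
      (hdw i) (hdw j)
      (hfadj i) (hvnotin i)
      (by rw [SimpleGraph.Walk.support_copy]; exact hvnotin j)
    have hsi : (p i).support = v :: (p i).tail.support := by
      rw [SimpleGraph.Walk.support_tail_of_not_nil _ (hnnil i)]
      exact (p i).support_eq_cons
    have hsj : (p j).support = v :: (p j).tail.support := by
      rw [SimpleGraph.Walk.support_tail_of_not_nil _ (hnnil j)]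
      exact (p j).support_eq_cons
    rw [hsi, hsj]
    exact congrArg (v :: ·) (heq.trans (SimpleGraph.Walk.support_copy _ _ _))
  have hNv : ∀ b, G.Adj v b → ∃ i : Fin 3, b = (p i).getVert 1 := by
    intro b hb
    have h3 := deg3_adj_cases hdeg (hfadj 0) (hfadj 1) (hfadj 2)
      (hfne 0 1 (by decide)) (hfne 0 2 (by decide)) (hfne 1 2 (by decide)) hb
    rcases h3 with h | h | h
    exacts [⟨0, h⟩, ⟨1, h⟩, ⟨2, h⟩]
  have hdegv3 : 3 ≤ G.degree v := by omega
  have hIdisj : ∀ i j : Fin 3, i ≠ j → ∀ z, z ∈ I i → z ∈ I j → False := by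
    intro i j hij z hzi hzj
    obtain ⟨hzi1, hziv, hziw⟩ := hzi
    obtain ⟨hzj1, hzjv, hzjw⟩ := hzj
    obtain ⟨hrpi, hdpi, hrli, hdli, hvdi, hwri, hcomi, hsupi⟩ :=
      split_facts (p i) (hpI i) hzi1 hziv hziw
    obtain ⟨hrpj, hdpj, hrlj, hdlj, hvdj, hwrj, hcomj, hsupj⟩ :=
      split_facts (p j) (hpI j) hzj1 hzjv hzjw
    set ri := ((p i).takeUntil z hzi1).reverse with hridef
    set di := (p i).dropUntil z hzi1 with hdidef
    set rj := ((p j).takeUntil z hzj1).reverse with hrjdef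
    set dj := (p j).dropUntil z hzj1 with hdjdef
    have hdegz : G.degree z = 2 := hintI i z hzi1 hziv hziw
    have hriS : ∀ t, t ∈ ri.support → t ∈ (p i).support := by
      intro t ht
      rw [hridef, SimpleGraph.Walk.support_reverse, List.mem_reverse] at ht
      exact SimpleGraph.Walk.support_takeUntil_subset _ hzi1 ht
    have hrjS : ∀ t, t ∈ rj.support → t ∈ (p j).support := by
      intro t ht
      rw [hrjdef, SimpleGraph.Walk.support_reverse, List.mem_reverse] at ht
      exact SimpleGraph.Walk.support_takeUntil_subset _ hzj1 ht
    have hdiS : ∀ t, t ∈ di.support → t ∈ (p i).support :=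
      fun t ht => SimpleGraph.Walk.support_dropUntil_subset _ hzi1 ht
    have hdjS : ∀ t, t ∈ dj.support → t ∈ (p j).support :=
      fun t ht => SimpleGraph.Walk.support_dropUntil_subset _ hzj1 ht
    have hari : G.Adj z (ri.getVert 1) := by
      have h2 := ri.adj_getVert_succ (i := 0) (by omega)
      rwa [ri.getVert_zero] at h2
    have hadi : G.Adj z (di.getVert 1) := by
      have h2 := di.adj_getVert_succ (i := 0) (by omega)
      rwa [di.getVert_zero] at h2
    have harj : G.Adj z (rj.getVert 1) := by
      have h2 := rj.adj_getVert_succ (i := 0) (by omega)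
      rwa [rj.getVert_zero] at h2
    have hadj' : G.Adj z (dj.getVert 1) := by
      have h2 := dj.adj_getVert_succ (i := 0) (by omega)
      rwa [dj.getVert_zero] at h2
    have hri1z : ri.getVert 1 ≠ z := by
      intro h
      have h2 : ri.getVert 1 = ri.getVert 0 := by rw [ri.getVert_zero, h]
      have := walk_getVert_inj hrpi.support_nodup (by omega) (by omega) h2
      omega
    have hdi1z : di.getVert 1 ≠ z := by
      intro h
      have h2 : di.getVert 1 = di.getVert 0 := by rw [di.getVert_zero, h]
      have := walk_getVert_inj hdpi.support_nodup (by omega) (by omega) h2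
      omega
    have hrj1z : rj.getVert 1 ≠ z := by
      intro h
      have h2 : rj.getVert 1 = rj.getVert 0 := by rw [rj.getVert_zero, h]
      have := walk_getVert_inj hrpj.support_nodup (by omega) (by omega) h2
      omega
    have hdj1z : dj.getVert 1 ≠ z := by
      intro h
      have h2 : dj.getVert 1 = dj.getVert 0 := by rw [dj.getVert_zero, h]
      have := walk_getVert_inj hdpj.support_nodup (by omega) (by omega) h2
      omega
    have hri1mem : ri.getVert 1 ∈ ri.support := by
      rw [SimpleGraph.Walk.mem_support_iff_exists_getVert]
      exact ⟨1, rfl, by omega⟩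
    have hdi1mem : di.getVert 1 ∈ di.support := by
      rw [SimpleGraph.Walk.mem_support_iff_exists_getVert]
      exact ⟨1, rfl, by omega⟩
    have hrj1mem : rj.getVert 1 ∈ rj.support := by
      rw [SimpleGraph.Walk.mem_support_iff_exists_getVert]
      exact ⟨1, rfl, by omega⟩
    have hdj1mem : dj.getVert 1 ∈ dj.support := by
      rw [SimpleGraph.Walk.mem_support_iff_exists_getVert]
      exact ⟨1, rfl, by omega⟩
    have hriNotd : ri.getVert 1 ∉ di.support := fun h => hri1z (hcomi _ hri1mem h)
    have hdiNotr : di.getVert 1 ∉ ri.support := fun h => hdi1z (hcomi _ h hdi1mem)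
    have hrjNotd : rj.getVert 1 ∉ dj.support := fun h => hrj1z (hcomj _ hrj1mem h)
    have hdjNotr : dj.getVert 1 ∉ rj.support := fun h => hdj1z (hcomj _ h hdj1mem)
    have hneI : ri.getVert 1 ≠ di.getVert 1 := by
      intro h
      exact hriNotd (h ▸ hdi1mem)
    have hneJ : rj.getVert 1 ≠ dj.getVert 1 := by
      intro h
      exact hrjNotd (h ▸ hdj1mem)
    have hddi : ∀ t ∈ di.support, t ≠ w i → G.degree t = 2 := by
      intro t ht hwt
      exact hintI i t (hdiS t ht) (fun h => hvdi (h ▸ ht)) hwt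
    have hddj : ∀ t ∈ dj.support, t ≠ w j → G.degree t = 2 := by
      intro t ht hwt
      exact hintI j t (hdjS t ht) (fun h => hvdj (h ▸ ht)) hwt
    have hdri : ∀ t ∈ ri.support, t ≠ v → G.degree t = 2 := by
      intro t ht hvt
      exact hintI i t (hriS t ht) hvt (fun h => hwri (h ▸ ht))
    have hdrj : ∀ t ∈ rj.support, t ≠ v → G.degree t = 2 := by
      intro t ht hvt
      exact hintI j t (hrjS t ht) hvt (fun h => hwrj (h ▸ ht))
    rcases deg2_adj_cases hdegz hari hadi hneI harj with h1 | h1 <;>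
      rcases deg2_adj_cases hdegz hari hadi hneI hadj' with h2 | h2
    · exact hneJ (h1.trans h2.symm)
    · -- aligned case
      have hDsupp : di.support = dj.support :=
        chain_determined di dj (ri.getVert 1) hdpi hdpj hddi hddj (hdw i) (hdw j)
          hari.symm hriNotd (by rw [← h1]; exact hrjNotd)
      have hRsupp : ri.support = rj.support :=
        chain_determined ri rj (di.getVert 1) hrpi hrpj hdri hdrj hdegv3 hdegv3
          hadi.symm hdiNotr (by rw [← h2]; exact hdjNotr)
      apply hdist i j hij
      rw [hsupi, hsupj]
      have h3 : ((p i).takeUntil z hzi1).support = ri.support.reverse := by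
        rw [hridef, SimpleGraph.Walk.support_reverse, List.reverse_reverse]
      have h4 : ((p j).takeUntil z hzj1).support = rj.support.reverse := by
        rw [hrjdef, SimpleGraph.Walk.support_reverse, List.reverse_reverse]
      rw [h3, h4, hRsupp, hDsupp]
    · -- cross case
      have hX : dj.support = ri.support :=
        chain_determined dj ri (rj.getVert 1) hdpj hrpi hddj hdri (hdw j) hdegv3
          harj.symm hrjNotd (by rw [h1]; exact hdiNotr)
      have hvri : v ∈ ri.support := SimpleGraph.Walk.end_mem_support ri
      rw [← hX] at hvri
      exact hvdj hvri
    · exact hneJ (h1.trans h2.symm)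
  set D : Set V := {z | z = v ∨ z ∈ I 0 ∨ z ∈ I 1 ∨ z ∈ I 2} with hDdef
  obtain ⟨φ⟩ := hom_of_delete hcrit (D := D) ⟨v, Or.inl rfl⟩
  have hwND : ∀ i, w i ∉ D := by
    intro i hwD
    rcases hwD with h | h | h | h
    · exact hvw i h.symm
    · have h2 := hIdeg 0 _ h
      have := hdw i
      omega
    · have h2 := hIdeg 1 _ h
      have := hdw i
      omega
    · have h2 := hIdeg 2 _ h
      have := hdw i
      omega
  have hverts : ∀ z, z ∉ D → z ∈ ((⊤ : G.Subgraph).deleteVerts D).verts := by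
    intro z hz
    rw [SimpleGraph.Subgraph.deleteVerts_verts, SimpleGraph.Subgraph.verts_top]
    exact ⟨Set.mem_univ z, hz⟩
  set yv : Fin 3 → Fin 7 := fun i => φ ⟨w i, hverts _ (hwND i)⟩ with hyvdef
  have hk40 := hk4 0
  have hk41 := hk4 1
  have hk42 := hk4 2
  obtain ⟨c, hc0, hc1, hc2⟩ := canReach_inter ⟨k 0, by omega⟩ ⟨k 1, by omega⟩ ⟨k 2, by omega⟩
    (yv 0) (yv 1) (yv 2)
    (by show 12 ≤ k 0 + 1 + (k 1 + 1) + (k 2 + 1); omega)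
  have hQex : ∀ i : Fin 3, ∃ q : (cycleGraph 7).Walk c (yv i), q.length = (p i).length := by
    intro i
    fin_cases i
    · obtain ⟨q, hq⟩ := exists_walk_of_canReach hc0
      exact ⟨q, hq.trans (hk 0).symm⟩
    · obtain ⟨q, hq⟩ := exists_walk_of_canReach hc1
      exact ⟨q, hq.trans (hk 1).symm⟩
    · obtain ⟨q, hq⟩ := exists_walk_of_canReach hc2
      exact ⟨q, hq.trans (hk 2).symm⟩
  choose Q hQlen using hQex
  obtain ⟨ψ, hψ0, hψ1, hψ2, hψout⟩ : ∃ ψ : V → Fin 7,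
      (∀ z, (z = v ∨ z ∈ I 0) → ψ z = (Q 0).getVert (List.idxOf z (p 0).support)) ∧
      (∀ z, ¬(z = v ∨ z ∈ I 0) → z ∈ I 1 → ψ z = (Q 1).getVert (List.idxOf z (p 1).support)) ∧
      (∀ z, ¬(z = v ∨ z ∈ I 0) → z ∉ I 1 → z ∈ I 2 →
        ψ z = (Q 2).getVert (List.idxOf z (p 2).support)) ∧
      (∀ z (hz : z ∈ ((⊤ : G.Subgraph).deleteVerts D).verts), z ∉ D → ψ z = φ ⟨z, hz⟩) := by
    refine ⟨fun z =>
      if h0 : (z = v ∨ z ∈ I 0) then (Q 0).getVert (List.idxOf z (p 0).support)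
      else if h1 : z ∈ I 1 then (Q 1).getVert (List.idxOf z (p 1).support)
      else if h2 : z ∈ I 2 then (Q 2).getVert (List.idxOf z (p 2).support)
      else φ ⟨z, hverts z (fun hD =>
        hD.elim (fun h => h0 (Or.inl h)) (fun hD2 =>
          hD2.elim (fun h => h0 (Or.inr h)) (fun hD3 => hD3.elim h1 h2)))⟩,
      ?_, ?_, ?_, ?_⟩
    · intro z h
      exact dif_pos h
    · intro z h0 h1
      dsimp only
      rw [dif_neg h0, dif_pos h1]
    · intro z h0 h1 h2
      dsimp only
      rw [dif_neg h0, dif_neg h1, dif_pos h2]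
    · intro z hz hD
      have h0 : ¬(z = v ∨ z ∈ I 0) := fun h => hD (h.elim Or.inl (fun h2 => Or.inr (Or.inl h2)))
      have h1 : z ∉ I 1 := fun h => hD (Or.inr (Or.inr (Or.inl h)))
      have h2 : z ∉ I 2 := fun h => hD (Or.inr (Or.inr (Or.inr h)))
      dsimp only
      rw [dif_neg h0, dif_neg h1, dif_neg h2]
  have hψI : ∀ (i : Fin 3) z, z ∈ I i → ψ z = (Q i).getVert (List.idxOf z (p i).support) := by
    intro i z hz
    fin_cases i
    · exact hψ0 z (Or.inr hz)
    · refine hψ1 z ?_ hz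
      rintro (h | h)
      · exact hz.2.1 h
      · exact hIdisj 1 0 (by decide) z hz h
    · refine hψ2 z ?_ ?_ hz
      · rintro (h | h)
        · exact hz.2.1 h
        · exact hIdisj 2 0 (by decide) z hz h
      · exact fun h => hIdisj 2 1 (by decide) z hz h
  have hψv : ∀ i : Fin 3, ψ v = (Q i).getVert 0 := by
    intro i
    have h := hψ0 v (Or.inl rfl)
    rw [(p 0).support_eq_cons, List.idxOf_cons_self] at h
    rw [h, (Q 0).getVert_zero, (Q i).getVert_zero]
  have hψw : ∀ i : Fin 3, ψ (w i) = (Q i).getVert ((Q i).length) := by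
    intro i
    rw [(Q i).getVert_length]
    exact hψout (w i) (hverts _ (hwND i)) (hwND i)
  have key : ∀ (i : Fin 3) (n : ℕ), n ≤ (p i).length →
      ψ ((p i).getVert n) = (Q i).getVert n := by
    intro i n hn
    rcases Nat.eq_zero_or_pos n with rfl | hpos
    · rw [(p i).getVert_zero, hψv i]
    rcases eq_or_ne n ((p i).length) with rfl | hnL
    · rw [(p i).getVert_length, hψw i, hQlen i]
    · have hzI : (p i).getVert n ∈ I i := hmemI i hn (by omega) hnL
      rw [hψI i _ hzI, walk_indexOf_getVert (hnd i) hn]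
  have hQadj : ∀ (i : Fin 3) {t : ℕ}, t < (p i).length →
      (cycleGraph 7).Adj ((Q i).getVert t) ((Q i).getVert (t+1)) := by
    intro i t ht
    exact (Q i).adj_getVert_succ (by rw [hQlen i]; omega)
  have mainv : ∀ b, G.Adj v b → (cycleGraph 7).Adj (ψ v) (ψ b) := by
    intro b hb
    obtain ⟨i, rfl⟩ := hNv b hb
    rw [hψv i, key i 1 (by rw [hk i]; omega)]
    exact hQadj i (by rw [hk i]; omega)
  have mainI : ∀ (i : Fin 3) a b, G.Adj a b → a ∈ I i →
      (cycleGraph 7).Adj (ψ a) (ψ b) := by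
    intro i a b hab haI
    obtain ⟨ha1, hav, haw⟩ := haI
    obtain ⟨htle, hta⟩ := walk_getVert_indexOf (p i) ha1
    set t := List.idxOf a (p i).support with htdef
    have ht0 : t ≠ 0 := fun h => hav (by rw [← hta, h, (p i).getVert_zero])
    have htL : t ≠ (p i).length := fun h => haw (by rw [← hta, h, (p i).getVert_length])
    have hdega : G.degree a = 2 := hintI i a ha1 hav haw
    have hprev : G.Adj a ((p i).getVert (t-1)) := by
      have h2 := (p i).adj_getVert_succ (i := t-1) (by omega)
      rw [(by omega : t - 1 + 1 = t), hta] at h2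
      exact h2.symm
    have hnext : G.Adj a ((p i).getVert (t+1)) := by
      have h2 := (p i).adj_getVert_succ (i := t) (by omega)
      rw [hta] at h2
      exact h2
    have hpn : (p i).getVert (t-1) ≠ (p i).getVert (t+1) := by
      intro h
      have := hxyI i (by omega) (by omega) h
      omega
    rcases deg2_adj_cases hdega hprev hnext hpn hab with h | h
    · rw [← hta, key i t htle, h, key i (t-1) (by omega)]
      have h2 := hQadj i (t := t-1) (by omega)
      rw [(by omega : t - 1 + 1 = t)] at h2
      exact h2.symm
    · rw [← hta, key i t htle, h, key i (t+1) (by omega)]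
      exact hQadj i (by omega)
  apply hcrit.1
  refine ⟨⟨ψ, ?_⟩⟩
  intro a b hab
  by_cases hav : a = v
  · subst hav
    exact mainv b hab
  by_cases hbv : b = v
  · subst hbv
    exact (mainv a hab.symm).symm
  by_cases haI : ∃ i, a ∈ I i
  · obtain ⟨i, h⟩ := haI
    exact mainI i a b hab h
  by_cases hbI : ∃ i, b ∈ I i
  · obtain ⟨i, h⟩ := hbI
    exact (mainI i b a hab.symm h).symm
  · push_neg at haI hbI
    have haD : a ∉ D := by
      rintro (h | h | h | h)
      exacts [hav h, haI 0 h, haI 1 h, haI 2 h]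
    have hbD : b ∉ D := by
      rintro (h | h | h | h)
      exacts [hbv h, hbI 0 h, hbI 1 h, hbI 2 h]
    rw [hψout a (hverts a haD) haD, hψout b (hverts b hbD) hbD]
    exact φ.map_adj (by
      rw [SimpleGraph.Subgraph.coe_adj]
      exact (SimpleGraph.Subgraph.deleteVerts_adj).mpr
        ⟨Set.mem_univ a, haD, Set.mem_univ b, hbD, (SimpleGraph.Subgraph.top_adj).mpr hab⟩)
end
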